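/- arXiv:2403.09654 — 9 statements merged into one kernel-verified Lean document; each statement's English description precedes it below -/
import Mathlib

section
/- For every natural number q₀ ≥ 2 there exist a natural number N, a positive natural number m, a strictly increasing sequence of natural numbers q₁ < q₂ < ... < q_N with each q_k ≥ 2, and signs δ₁, ..., δ_N ∈ {1, -1}, such that π/4 = m·arctan(1/q₀) + Σ_{k=1}^{N} δ_k·arctan(1/q_k). -/
open Real Finset

lemma arctan_split (n : ℕ) (hn : 1 ≤ n) :
    Real.arctan (1 / (n:ℝ)) =
      Real.arctan (1 / ((n:ℝ) + 1)) + Real.arctan (1 / ((n:ℝ)^2 + (n:ℝ) + 1)) := by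
  have h1 : (1:ℝ) ≤ (n:ℝ) := by exact_mod_cast hn
  have hn0 : (n:ℝ) ≠ 0 := by linarith
  have hp1 : ((n:ℝ) + 1) ≠ 0 := by linarith
  have hp2 : ((n:ℝ)^2 + (n:ℝ) + 1) ≠ 0 := by nlinarith
  have hlt : (1 / ((n:ℝ) + 1)) * (1 / ((n:ℝ)^2 + (n:ℝ) + 1)) < 1 := by
    rw [div_mul_div_comm, div_lt_one (by nlinarith)]
    nlinarith
  rw [Real.arctan_add hlt]
  congr 1
  rw [div_eq_div_iff hn0 (by
    have : (1:ℝ) / ((n:ℝ) + 1) * (1 / ((n:ℝ)^2 + (n:ℝ) + 1)) ≠ 1 := ne_of_lt hlt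
    intro hzero
    apply this
    linarith)]
  field_simp
  ring

lemma chain (b : ℕ) (hb : 1 ≤ b) :
    Real.pi / 4 = Real.arctan (1 / (b:ℝ)) +
      ∑ n ∈ Ico 1 b, Real.arctan (1 / (((n:ℝ))^2 + (n:ℝ) + 1)) := by
  induction b with
  | zero => omega
  | succ b ih =>
    rcases Nat.lt_or_ge 1 (b+1) with h | h
    · have hb1 : 1 ≤ b := by omega
      rw [Finset.sum_Ico_succ_top hb1]
      have hs := arctan_split b hb1
      have hih := ih hb1
      have hc : ((b+1 : ℕ):ℝ) = (b:ℝ) + 1 := by push_cast; ring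
      rw [hc]
      linarith
    · have : b = 0 := by omega
      subst this
      simp [Real.arctan_one]

lemma assemble (q₀ : ℕ) (m : ℕ) (hm : 0 < m) (S : Finset ℕ)
    (hS : ∀ s ∈ S, 2 ≤ s)
    (h : Real.pi / 4 = (m:ℝ) * Real.arctan (1 / (q₀:ℝ)) +
      ∑ s ∈ S, Real.arctan (1 / (s:ℝ))) :
    ∃ (N : ℕ) (m : ℕ) (q : ℕ → ℕ) (δ : ℕ → ℤ),
      0 < m ∧
      (∀ k, 1 ≤ k → k < N → q k < q (k + 1)) ∧
      (∀ k, 1 ≤ k → k ≤ N → 2 ≤ q k) ∧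
      (∀ k, 1 ≤ k → k ≤ N → δ k = 1 ∨ δ k = -1) ∧
      Real.pi / 4 = (m : ℝ) * Real.arctan (1 / (q₀ : ℝ)) +
        ∑ k ∈ Finset.Icc 1 N, (δ k : ℝ) * Real.arctan (1 / (q k : ℝ)) := by
  classical
  set N := S.card with hN
  let e : Fin N ↪o ℕ := S.orderEmbOfFin rfl
  refine ⟨N, m, fun k => if hk : k - 1 < N then e ⟨k - 1, hk⟩ else 0,
    fun _ => 1, hm, ?_, ?_, ?_, ?_⟩
  · intro k hk hkN
    have h1 : k - 1 < N := by omega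
    have h2 : k + 1 - 1 < N := by omega
    simp only [dif_pos h1, dif_pos h2]
    exact e.strictMono (by simp [Fin.lt_def]; omega)
  · intro k hk hkN
    have h1 : k - 1 < N := by omega
    simp only [dif_pos h1]
    exact hS _ (Finset.orderEmbOfFin_mem S rfl ⟨k - 1, h1⟩)
  · intro k _ _; left; rfl
  · rw [h]
    congr 1
    rw [← Finset.Ico_add_one_right_eq_Icc, Finset.sum_Ico_eq_sum_range]
    simp only [Nat.add_sub_cancel, Int.cast_one, one_mul]
    symm
    refine Finset.sum_bij
      (i := fun (j : ℕ) (hj : j ∈ range N) => (e ⟨j, Finset.mem_range.mp hj⟩ : ℕ))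
      (fun j hj => Finset.orderEmbOfFin_mem S rfl _)
      (fun a ha b hb hab => ?_)
      (fun s hs => ?_)
      (fun j hj => ?_)
    · exact congrArg Fin.val (e.injective hab)
    · have hr : s ∈ Set.range (S.orderEmbOfFin rfl) := by
        rw [Finset.range_orderEmbOfFin]; exact hs
      obtain ⟨i, hi⟩ := hr
      exact ⟨i.1, Finset.mem_range.mpr i.2, by simpa [e] using hi⟩
    · have hjN : j < N := by have := Finset.mem_range.mp hj; omega
      simp only [show 1 + j - 1 = j from by omega, dif_pos hjN]

/-- For every natural number `q₀ ≥ 2` there exist `N : ℕ`, a positive natural number `m`,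
a strictly increasing sequence `q 1 < q 2 < ... < q N` of natural numbers each `≥ 2`,
and signs `δ k ∈ {1, -1}`, such that
`π/4 = m·arctan(1/q₀) + ∑_{k=1}^{N} δ k · arctan(1/q k)`. -/
theorem machin_like_formula_exists (q₀ : ℕ) (hq₀ : 2 ≤ q₀) :
    ∃ (N : ℕ) (m : ℕ) (q : ℕ → ℕ) (δ : ℕ → ℤ),
      0 < m ∧
      (∀ k, 1 ≤ k → k < N → q k < q (k + 1)) ∧
      (∀ k, 1 ≤ k → k ≤ N → 2 ≤ q k) ∧
      (∀ k, 1 ≤ k → k ≤ N → δ k = 1 ∨ δ k = -1) ∧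
      Real.pi / 4 = (m : ℝ) * Real.arctan (1 / (q₀ : ℝ)) +
        ∑ k ∈ Finset.Icc 1 N, (δ k : ℝ) * Real.arctan (1 / (q k : ℝ)) := by
  have hchain := chain q₀ (by omega)
  set f : ℕ → ℕ := fun n => n^2 + n + 1 with hf
  have hfm : StrictMono f := by
    intro a b hab
    simp only [hf]
    nlinarith
  have hsum : ∑ s ∈ (Ico 1 q₀).image f, Real.arctan (1/(s:ℝ)) =
      ∑ n ∈ Ico 1 q₀, Real.arctan (1/((f n : ℕ):ℝ)) :=
    Finset.sum_image (fun a _ b _ h => hfm.injective h)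
  have hcast : ∀ n : ℕ, ((f n : ℕ):ℝ) = (n:ℝ)^2 + (n:ℝ) + 1 := by
    intro n; simp only [hf]; push_cast; ring
  have hchain' : Real.pi/4 = Real.arctan (1/(q₀:ℝ)) +
      ∑ s ∈ (Ico 1 q₀).image f, Real.arctan (1/(s:ℝ)) := by
    rw [hsum]
    simp_rw [hcast]
    exact hchain
  have hge : ∀ s ∈ (Ico 1 q₀).image f, 2 ≤ s := by
    intro s hs
    obtain ⟨n, hn, rfl⟩ := Finset.mem_image.mp hs
    have h1 := (Finset.mem_Ico.mp hn).1
    simp only [hf]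
    nlinarith
  by_cases hmem : q₀ ∈ (Ico 1 q₀).image f
  · apply assemble q₀ 2 (by norm_num) (((Ico 1 q₀).image f).erase q₀)
      (fun s hs => hge s (Finset.mem_of_mem_erase hs))
    rw [Finset.sum_erase_eq_sub hmem]
    push_cast
    linarith
  · apply assemble q₀ 1 one_pos ((Ico 1 q₀).image f) hge
    rw [hchain']
    push_cast
    ring
end

section
/- For every natural number q₀ ≥ 2 there exist a natural number N, a positive natural number m, natural numbers q₁, ..., q_N, and signs δ₁, ..., δ_N ∈ {1, -1}, such that π/4 = m·arctan(1/q₀) + Σ_{k=1}^{N} δ_k·arctan(1/q_k), with q₁ ≥ 2·q₀, q_{k+1} > q_k² for all 1 ≤ k < N, and moreover the Lehmer measure satisfies 1/log₁₀(q₀) + Σ_{k=1}^{N} 1/log₁₀(q_k) < 3/log₁₀(q₀). -/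
set_option maxHeartbeats 1000000
set_option synthInstance.maxHeartbeats 400000

open GaussianInt Zsqrtd Finset

local notation "ℤi" => GaussianInt

private lemma prime_of_norm_prime {π : ℤi} {p : ℕ} (hp : p.Prime) (h : π.norm = p) :
    Prime π := by
  rw [← irreducible_iff_prime]
  constructor
  · rw [← Zsqrtd.norm_eq_one_iff, h]
    simp [hp.ne_one]
  · intro a b hab
    have hn : (a.norm * b.norm : ℤ) = p := by rw [← Zsqrtd.norm_mul, ← hab, h]
    have hN : a.norm.natAbs * b.norm.natAbs = p := by
      have := congrArg Int.natAbs hn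
      rwa [Int.natAbs_mul, Int.natAbs_natCast] at this
    rcases hp.eq_one_or_self_of_dvd a.norm.natAbs ⟨_, hN.symm⟩ with h1 | h1
    · exact Or.inl (Zsqrtd.norm_eq_one_iff.mp h1)
    · right
      apply Zsqrtd.norm_eq_one_iff.mp
      rw [h1] at hN
      exact Nat.eq_of_mul_eq_mul_left hp.pos (by rwa [mul_one])

private lemma exists_odd_prime_dvd (q₀ : ℕ) (hq : 2 ≤ q₀) :
    ∃ p : ℕ, p.Prime ∧ p ≠ 2 ∧ p ∣ q₀ ^ 2 + 1 := by
  rcases Nat.even_or_odd q₀ with he | ho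
  · have hne : q₀ ^ 2 + 1 ≠ 1 := by
      have : 4 ≤ q₀ ^ 2 := by nlinarith
      omega
    refine ⟨(q₀ ^ 2 + 1).minFac, Nat.minFac_prime hne, ?_, Nat.minFac_dvd _⟩
    intro h2
    have hdvd : 2 ∣ q₀ ^ 2 + 1 := by
      have := Nat.minFac_dvd (q₀ ^ 2 + 1); rwa [h2] at this
    obtain ⟨r, hr⟩ := he
    have : q₀ ^ 2 + 1 = 2 * (2 * (r * r)) + 1 := by subst hr; ring
    omega
  · obtain ⟨r, hr⟩ := ho
    have hr1 : 1 ≤ r := by omega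
    have hs : q₀ ^ 2 + 1 = (2 * (r * r + r) + 1) * 2 := by subst hr; ring
    have hne : 2 * (r * r + r) + 1 ≠ 1 := by nlinarith
    refine ⟨_, Nat.minFac_prime hne, ?_, dvd_trans (Nat.minFac_dvd _) ⟨2, hs⟩⟩
    intro h2
    have hdvd : 2 ∣ 2 * (r * r + r) + 1 := by
      have := Nat.minFac_dvd (2 * (r * r + r) + 1); rwa [h2] at this
    omega

private lemma conj_dvd_conj {x y : ℤi} (h : x ∣ y) : star x ∣ star y := by
  obtain ⟨c, rfl⟩ := h
  exact ⟨star c, by rw [star_mul, mul_comm]⟩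

private lemma norm_dvd_norm {x y : ℤi} (h : x ∣ y) : x.norm ∣ y.norm := by
  obtain ⟨c, rfl⟩ := h
  exact ⟨c.norm, (Zsqrtd.norm_mul x c)⟩

private lemma gauss_im_ne_zero (q₀ : ℕ) (hq : 2 ≤ q₀) (m : ℕ)
    (hodd : ∃ p : ℕ, p.Prime ∧ p ≠ 2 ∧ p ∣ q₀ ^ 2 + 1) :
    ((⟨1, 1⟩ : ℤi) * (⟨(q₀ : ℤ), -1⟩ : ℤi) ^ m).im ≠ 0 := by
  rcases Nat.eq_zero_or_pos m with rfl | hm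
  · simp
  intro him
  obtain ⟨p, hp, hp2, hpdvd⟩ := hodd
  haveI := Fact.mk hp
  have hsq : IsSquare (-1 : ZMod p) := by
    refine ⟨(q₀ : ZMod p), ?_⟩
    have h0 : ((q₀ ^ 2 + 1 : ℕ) : ZMod p) = 0 := by
      rw [ZMod.natCast_eq_zero_iff]; exact hpdvd
    push_cast at h0
    linear_combination -h0
  have hp4 : p % 4 ≠ 3 := ZMod.exists_sq_eq_neg_one_iff.mp hsq
  obtain ⟨a, b, hab⟩ := Nat.Prime.sq_add_sq hp4
  set ζ : ℤi := ⟨(q₀ : ℤ), -1⟩ with hζ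
  set π : ℤi := ⟨(a : ℤ), (b : ℤ)⟩ with hπ
  have hπnorm : π.norm = p := by
    simp only [Zsqrtd.norm, hπ]
    push_cast [← hab]
    ring
  have hπp : Prime π := prime_of_norm_prime hp hπnorm
  have hπsnorm : (star π).norm = p := by rw [Zsqrtd.norm_conj]; exact hπnorm
  have hπsp : Prime (star π) := prime_of_norm_prime hp hπsnorm
  have hπdvdp : π ∣ (p : ℤi) := by
    refine ⟨star π, ?_⟩
    have h1 := Zsqrtd.norm_eq_mul_conj π
    rw [hπnorm] at h1
    rw [← h1]
    push_cast
    rfl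
  have hpζ : (p : ℤi) ∣ ζ * star ζ := by
    have h1 : ζ * star ζ = ((q₀ ^ 2 + 1 : ℕ) : ℤi) := by
      have h2 := Zsqrtd.norm_eq_mul_conj ζ
      have h3 : ζ.norm = ((q₀ ^ 2 + 1 : ℕ) : ℤ) := by
        simp only [Zsqrtd.norm, hζ]; push_cast; ring
      rw [h3] at h2
      rw [← h2]
      push_cast
      rfl
    rw [h1]
    exact Nat.cast_dvd_cast hpdvd
  -- extract prime ρ ∣ ζ with prime conjugate and norm p
  obtain ⟨ρ, hρp, hρsp, hρζ, hρn, hρsn⟩ :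
      ∃ ρ : ℤi, Prime ρ ∧ Prime (star ρ) ∧ ρ ∣ ζ ∧ ρ.norm = p ∧ (star ρ).norm = p := by
    rcases hπp.2.2 _ _ (hπdvdp.trans hpζ) with h | h
    · exact ⟨π, hπp, hπsp, h, hπnorm, hπsnorm⟩
    · refine ⟨star π, hπsp, by rwa [star_star], ?_, hπsnorm, by rwa [star_star]⟩
      have := conj_dvd_conj h
      rwa [star_star] at this
  set z : ℤi := (⟨1, 1⟩ : ℤi) * ζ ^ m with hz
  have hρz : ρ ∣ z := Dvd.dvd.mul_left (hρζ.trans (dvd_pow dvd_rfl hm.ne')) _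
  have hzstar : star z = z := Zsqrtd.ext rfl (by rw [Zsqrtd.im_star, him, neg_zero])
  have hρsz : star ρ ∣ z := by
    have := conj_dvd_conj hρz
    rwa [hzstar] at this
  rw [hz] at hρsz
  rcases hρsp.2.2 _ _ hρsz with h | h
  · have hd := norm_dvd_norm h
    rw [hρsn] at hd
    have : (Zsqrtd.norm (⟨1, 1⟩ : ℤi)) = 2 := by simp [Zsqrtd.norm]
    rw [this] at hd
    have : (p : ℤ) ∣ ((2 : ℕ) : ℤ) := by exact_mod_cast hd
    have := Int.natCast_dvd_natCast.mp this
    exact hp2 ((Nat.prime_dvd_prime_iff_eq hp Nat.prime_two).mp this)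
  · have hρζs : ρ ∣ star ζ := by
      have := conj_dvd_conj (hρsp.dvd_of_dvd_pow h)
      rwa [star_star] at this
    have hdiff : ρ ∣ (⟨0, 2⟩ : ℤi) := by
      have : (⟨0, 2⟩ : ℤi) = star ζ - ζ := by
        apply Zsqrtd.ext <;> simp [hζ, Zsqrtd.re_star, Zsqrtd.im_star]
      rw [this]
      exact dvd_sub hρζs hρζ
    have hd := norm_dvd_norm hdiff
    rw [hρn] at hd
    have : (Zsqrtd.norm (⟨0, 2⟩ : ℤi)) = 4 := by simp [Zsqrtd.norm]
    rw [this] at hd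
    have h4 : (p : ℤ) ∣ ((4 : ℕ) : ℤ) := by exact_mod_cast hd
    have h4' := Int.natCast_dvd_natCast.mp h4
    have hpd2 : p ∣ 2 := hp.dvd_of_dvd_pow (show p ∣ 2 ^ 2 by norm_num; exact h4')
    exact hp2 ((Nat.prime_dvd_prime_iff_eq hp Nat.prime_two).mp hpd2)

/-- phase-1 state: (u,v) ↦ (qu - v, qv + u), start (1,1) -/
private def mst (q : ℤ) : ℕ → ℤ × ℤ
  | 0 => (1, 1)
  | k+1 => (q * (mst q k).1 - (mst q k).2, q * (mst q k).2 + (mst q k).1)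

private lemma arctan_step (u v n : ℝ) (hv : 0 < v) (hn : 0 < n) (hv' : 0 < n * v + u) :
    Real.arctan (u / v) = Real.arctan (1 / n) + Real.arctan ((n * u - v) / (n * v + u)) := by
  have hlt : (1 / n) * ((n * u - v) / (n * v + u)) < 1 := by
    rw [div_mul_div_comm, div_lt_one (by positivity)]
    nlinarith [mul_pos (mul_pos hn hn) hv]
  rw [Real.arctan_add hlt]
  congr 1
  have hD : 1 - 1 / n * ((n * u - v) / (n * v + u)) = ((n ^ 2 + 1) * v) / (n * (n * v + u)) := by
    field_simp
    ring
  have hDne : 1 - 1 / n * ((n * u - v) / (n * v + u)) ≠ 0 := by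
    rw [hD]; positivity
  rw [div_eq_div_iff hv.ne' hDne]
  field_simp
  ring

private lemma chain_s1 (q₀ : ℕ) (hq : 2 ≤ q₀) :
    ∀ k : ℕ, (∀ j : ℕ, j < k → ¬ (2 * (q₀ : ℤ) * (mst q₀ j).1 ≤ (mst q₀ j).2)) →
      0 < (mst q₀ k).2 ∧ (mst q₀ k).1 ≤ (mst q₀ k).2 ∧
        ((q₀ : ℤ) + 1) * (mst q₀ k).1 ≤ ((q₀ : ℤ) + 1 - (k : ℤ)) * (mst q₀ k).2 := by
  intro k
  induction k with
  | zero => intro _; simp [mst]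
  | succ k ih =>
    intro h
    obtain ⟨hv, huv, hlin⟩ := ih (fun j hj => h j (Nat.lt_succ_of_lt hj))
    have hnp := h k (Nat.lt_succ_self k)
    push_neg at hnp
    set u := (mst q₀ k).1
    set v := (mst q₀ k).2
    have hq' : (2 : ℤ) ≤ (q₀ : ℤ) := by exact_mod_cast hq
    have hu1 : 1 ≤ u := by nlinarith
    have hu' : (mst q₀ (k+1)).1 = (q₀ : ℤ) * u - v := rfl
    have hv' : (mst q₀ (k+1)).2 = (q₀ : ℤ) * v + u := rfl
    rw [hu', hv']
    have hvpos' : 0 < (q₀ : ℤ) * v + u := by nlinarith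
    refine ⟨hvpos', by nlinarith, ?_⟩
    -- key algebraic inequality
    have key : ((q₀:ℤ) + 1) * ((q₀:ℤ) * u - v) * v + v * ((q₀:ℤ) * v + u)
        ≤ ((q₀:ℤ) + 1) * u * ((q₀:ℤ) * v + u) := by nlinarith
    have hlin' : ((q₀:ℤ) + 1) * u * ((q₀:ℤ) * v + u) ≤ ((q₀:ℤ) + 1 - k) * v * ((q₀:ℤ) * v + u) := by
      have := mul_le_mul_of_nonneg_right hlin (le_of_lt hvpos')
      linarith
    have hfin : ((q₀:ℤ) + 1) * ((q₀:ℤ) * u - v) * v ≤ ((q₀:ℤ) + 1 - (k+1:ℕ)) * ((q₀:ℤ) * v + u) * v := by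
      push_cast
      nlinarith
    exact le_of_mul_le_mul_right (by linarith [hfin]) hv

private lemma exists_stop (q₀ : ℕ) (hq : 2 ≤ q₀) :
    ∃ k : ℕ, 2 * (q₀ : ℤ) * (mst q₀ k).1 ≤ (mst q₀ k).2 := by
  by_contra hcon
  push_neg at hcon
  have h := chain_s1 q₀ hq (q₀ + 1) (fun j _ => by push_neg; exact hcon j)
  obtain ⟨hv, huv, hlin⟩ := h
  have hq' : (2 : ℤ) ≤ (q₀ : ℤ) := by exact_mod_cast hq
  have hnp := hcon (q₀ + 1)
  push_cast at hlin
  nlinarith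

private lemma mst_gauss (q₀ : ℕ) (k : ℕ) :
    (⟨(mst (q₀ : ℤ) k).2, (mst (q₀ : ℤ) k).1⟩ : ℤi) = (⟨1, 1⟩ : ℤi) * (⟨(q₀ : ℤ), -1⟩ : ℤi) ^ k := by
  induction k with
  | zero => simp [mst]
  | succ k ih =>
    rw [pow_succ, ← mul_assoc, ← ih]
    apply Zsqrtd.ext <;> simp [mst, Zsqrtd.re_mul, Zsqrtd.im_mul] <;> ring

private lemma u_ne_zero (q₀ : ℕ) (hq : 2 ≤ q₀) (k : ℕ) : (mst (q₀ : ℤ) k).1 ≠ 0 := by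
  have h := gauss_im_ne_zero q₀ hq k (exists_odd_prime_dvd q₀ hq)
  rw [← mst_gauss] at h
  simpa using h

private lemma phase1 (q₀ : ℕ) (hq : 2 ≤ q₀) :
    ∃ (m : ℕ) (u v : ℤ), 0 < m ∧ 0 < v ∧ u ≠ 0 ∧ 2 * (q₀ : ℤ) * |u| ≤ v ∧
      Real.pi / 4 = (m : ℝ) * Real.arctan (1 / (q₀ : ℝ)) + Real.arctan ((u : ℝ) / (v : ℝ)) := by
  have hq' : (2 : ℤ) ≤ (q₀ : ℤ) := by exact_mod_cast hq
  have hqR : (0 : ℝ) < (q₀ : ℝ) := by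
    have : (0 : ℕ) < q₀ := by omega
    exact_mod_cast this
  have hex := exists_stop q₀ hq
  classical
  set m := Nat.find hex with hmdef
  have hstop : 2 * (q₀ : ℤ) * (mst q₀ m).1 ≤ (mst q₀ m).2 := Nat.find_spec hex
  have hmin : ∀ j, j < m → ¬ (2 * (q₀ : ℤ) * (mst q₀ j).1 ≤ (mst q₀ j).2) :=
    fun j hj => Nat.find_min hex hj
  -- the angle identity up to any k ≤ m
  have angle : ∀ k, k ≤ m →
      Real.pi / 4 = (k : ℝ) * Real.arctan (1 / (q₀ : ℝ)) +
        Real.arctan (((mst q₀ k).1 : ℝ) / ((mst q₀ k).2 : ℝ)) := by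
    intro k
    induction k with
    | zero => simp [mst]
    | succ k ih =>
      intro hk1
      have hik := ih (le_of_lt (Nat.lt_of_succ_le hk1))
      obtain ⟨hvk, -, -⟩ := chain_s1 q₀ hq k (fun j hj => hmin j (lt_of_lt_of_le hj (le_of_lt (Nat.lt_of_succ_le hk1))))
      obtain ⟨hvk1, -, -⟩ := chain_s1 q₀ hq (k+1) (fun j hj => hmin j (lt_of_lt_of_le hj hk1))
      have hvkR : (0 : ℝ) < ((mst q₀ k).2 : ℝ) := by exact_mod_cast hvk
      have hv1R : (0 : ℝ) < (q₀ : ℝ) * ((mst q₀ k).2 : ℝ) + ((mst q₀ k).1 : ℝ) := by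
        have : (0 : ℤ) < (q₀ : ℤ) * (mst q₀ k).2 + (mst q₀ k).1 := hvk1
        exact_mod_cast this
      have hstep := arctan_step ((mst q₀ k).1 : ℝ) ((mst q₀ k).2 : ℝ) (q₀ : ℝ) hvkR hqR hv1R
      have hcast1 : ((mst q₀ (k+1)).1 : ℝ) = (q₀ : ℝ) * ((mst q₀ k).1 : ℝ) - ((mst q₀ k).2 : ℝ) := by
        have : (mst q₀ (k+1)).1 = (q₀ : ℤ) * (mst q₀ k).1 - (mst q₀ k).2 := rfl
        exact_mod_cast congrArg (Int.cast : ℤ → ℝ) this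
      have hcast2 : ((mst q₀ (k+1)).2 : ℝ) = (q₀ : ℝ) * ((mst q₀ k).2 : ℝ) + ((mst q₀ k).1 : ℝ) := by
        have : (mst q₀ (k+1)).2 = (q₀ : ℤ) * (mst q₀ k).2 + (mst q₀ k).1 := rfl
        exact_mod_cast congrArg (Int.cast : ℤ → ℝ) this
      rw [hik, hstep, hcast1, hcast2]
      push_cast
      ring
  refine ⟨m, (mst q₀ m).1, (mst q₀ m).2, ?_, ?_, ?_, ?_, ?_⟩
  · -- 0 < m
    rcases Nat.eq_zero_or_pos m with h0 | h
    · exfalso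
      rw [h0] at hstop
      simp [mst] at hstop
      omega
    · exact h
  · exact (chain_s1 q₀ hq m hmin).1
  · exact u_ne_zero q₀ hq m
  · -- 2 q₀ |u| ≤ v
    have hm1 : 1 ≤ m := by
      rcases Nat.eq_zero_or_pos m with h0 | h
      · exfalso; rw [h0] at hstop; simp [mst] at hstop; omega
      · exact h
    obtain ⟨k, hk⟩ : ∃ k, m = k + 1 := ⟨m - 1, by omega⟩
    have hnp := hmin k (by omega)
    push_neg at hnp
    obtain ⟨hvk, huvk, -⟩ := chain_s1 q₀ hq k (fun j hj => hmin j (by omega))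
    have hu1 : 1 ≤ (mst q₀ k).1 := by nlinarith
    have hcross : -(mst q₀ m).2 < 2 * (q₀ : ℤ) * (mst q₀ m).1 := by
      rw [hk]
      have h1 : (mst q₀ (k+1)).1 = (q₀ : ℤ) * (mst q₀ k).1 - (mst q₀ k).2 := rfl
      have h2 : (mst q₀ (k+1)).2 = (q₀ : ℤ) * (mst q₀ k).2 + (mst q₀ k).1 := rfl
      rw [h1, h2]
      nlinarith
    rcases abs_cases ((mst q₀ m).1) with ⟨ha, -⟩ | ⟨ha, -⟩ <;> rw [ha] <;> linarith
  · exact angle m le_rfl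

private lemma arctan_step_sgn (u v n δ : ℝ) (hδ : δ = 1 ∨ δ = -1) (hv : 0 < v) (hn : 0 < n)
    (hv' : 0 < n * v + δ * u) :
    Real.arctan (u / v) = δ * Real.arctan (1 / n) +
      Real.arctan ((n * u - δ * v) / (n * v + δ * u)) := by
  rcases hδ with rfl | rfl
  · rw [one_mul]
    simpa using arctan_step u v n hv hn (by linarith)
  · have h1 := arctan_step (-u) v n hv hn (by linarith)
    rw [neg_div, Real.arctan_neg] at h1
    have h2 : Real.arctan ((n * u - (-1) * v) / (n * v + (-1) * u)) =
        - Real.arctan ((n * (-u) - v) / (n * v + -u)) := by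
      rw [← Real.arctan_neg, ← neg_div]
      congr 2 <;> ring
    rw [h2]
    linarith

private lemma sum_Icc_shift (g : ℕ → ℝ) (N : ℕ) :
    ∑ k ∈ Finset.Icc 1 (N+1), g k = g 1 + ∑ k ∈ Finset.Icc 1 N, g (k+1) := by
  rw [← Finset.Ico_add_one_right_eq_Icc, ← Finset.Ico_add_one_right_eq_Icc, Finset.sum_Ico_eq_sum_range,
    Finset.sum_Ico_eq_sum_range]
  simp only [Nat.succ_sub_one, Nat.add_sub_cancel]
  rw [Finset.sum_range_succ']
  rw [add_comm]
  rfl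

private lemma phase2 : ∀ (b : ℕ) (u v t : ℤ), u ≠ 0 → u.natAbs ≤ b → 0 < v → 2 ≤ t →
    (2 * t - 1) * |u| ≤ 2 * v →
    ∃ (N : ℕ) (q : ℕ → ℕ) (δ : ℕ → ℤ),
      1 ≤ N ∧
      (∀ k, 1 ≤ k → k ≤ N → δ k = 1 ∨ δ k = -1) ∧
      Real.arctan ((u : ℝ) / (v : ℝ)) =
        ∑ k ∈ Finset.Icc 1 N, (δ k : ℝ) * Real.arctan (1 / (q k : ℝ)) ∧
      t ≤ (q 1 : ℤ) ∧
      (∀ k, 1 ≤ k → k < N → (q k) ^ 2 < q (k + 1)) ∧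
      (∀ k, 1 ≤ k → k ≤ N → 2 ≤ q k) := by
  intro b
  induction b with
  | zero =>
    intro u v t hu hub _ _ _
    exfalso
    have := Int.natAbs_pos.mpr hu
    omega
  | succ b ih =>
    intro u v t hu hub hv ht hbound
    set a : ℤ := |u| with hadef
    have ha1 : 1 ≤ a := Int.one_le_abs (by simpa using hu)
    have hana : (u.natAbs : ℤ) = a := Int.abs_eq_natAbs u ▸ rfl
    set n : ℤ := (2 * v + a) / (2 * a) with hndef
    have h2a : (0:ℤ) < 2 * a := by linarith
    have hdm := Int.mul_ediv_add_emod (2 * v + a) (2 * a)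
    have hr0 : 0 ≤ (2 * v + a) % (2 * a) := Int.emod_nonneg _ (by omega)
    have hrlt : (2 * v + a) % (2 * a) < 2 * a := Int.emod_lt_of_pos _ h2a
    have hnla : n * (2 * a) ≤ 2 * v + a := by rw [hndef]; linarith [hdm]
    have hnua : 2 * v + a < n * (2 * a) + 2 * a := by rw [hndef]; linarith [hdm]
    have hnt : t ≤ n := by
      by_contra hcon
      push_neg at hcon
      have : n + 1 ≤ t := hcon
      nlinarith
    have hn2 : 2 ≤ n := le_trans ht hnt
    -- sign
    set δ : ℤ := if 0 ≤ u then 1 else -1 with hδdef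
    have hδ : δ = 1 ∨ δ = -1 := by rw [hδdef]; split <;> simp
    have hδu : δ * a = u := by
      rw [hδdef, hadef]
      rcases abs_cases u with ⟨h1, h2⟩ | ⟨h1, h2⟩ <;> simp [h1] <;> omega
    have hδua : δ * u = a := by
      rcases hδ with h | h <;> rw [h] at hδu ⊢ <;> omega
    set U : ℤ := n * u - δ * v with hUdef
    set V : ℤ := n * v + δ * u with hVdef
    have hVa : V = n * v + a := by rw [hVdef, hδua]
    have hV0 : 0 < V := by rw [hVa]; nlinarith
    have hUd : U = δ * (n * a - v) := by
      rw [hUdef, ← hδu]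
      rcases hδ with h | h <;> rw [h] <;> ring
    have hUabs : |U| = |n * a - v| := by
      rw [hUd, abs_mul]
      rcases hδ with h | h <;> rw [h] <;> simp
    have hU2 : 2 * |U| ≤ a := by
      rw [hUabs]
      rcases abs_cases (n * a - v) with ⟨h1, _⟩ | ⟨h1, _⟩ <;> rw [h1] <;> linarith
    -- the arctan step, in ℝ
    have hvR : (0:ℝ) < (v : ℝ) := by exact_mod_cast hv
    have hnR : (0:ℝ) < (n : ℝ) := by exact_mod_cast lt_of_lt_of_le (by norm_num) hn2
    have hVR : (0:ℝ) < (n : ℝ) * (v : ℝ) + (δ : ℝ) * (u : ℝ) := by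
      have : (0:ℤ) < n * v + δ * u := hV0
      exact_mod_cast this
    have hδR : (δ : ℝ) = 1 ∨ (δ : ℝ) = -1 := by
      rcases hδ with h | h <;> rw [h] <;> simp
    have hstep := arctan_step_sgn (u : ℝ) (v : ℝ) (n : ℝ) (δ : ℝ) hδR hvR hnR hVR
    have hUR : ((U : ℤ) : ℝ) = (n : ℝ) * (u : ℝ) - (δ : ℝ) * (v : ℝ) := by
      rw [hUdef]; push_cast; ring
    have hVRc : ((V : ℤ) : ℝ) = (n : ℝ) * (v : ℝ) + (δ : ℝ) * (u : ℝ) := by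
      rw [hVdef]; push_cast; ring
    have hn0 : (0:ℤ) ≤ n := by linarith
    have hq1cZ : (n.toNat : ℤ) = n := Int.toNat_of_nonneg hn0
    have hq1c : ((n.toNat : ℕ) : ℝ) = (n : ℝ) := by exact_mod_cast hq1cZ
    by_cases hU0 : U = 0
    · -- single term
      refine ⟨1, fun _ => n.toNat, fun _ => δ, le_refl 1, fun _ _ _ => hδ, ?_, ?_, ?_, ?_⟩
      · rw [Finset.Icc_self, Finset.sum_singleton, hq1c, hstep, ← hUR, ← hVRc, hU0]
        simp
      · rw [hq1cZ]; exact hnt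
      · intro k hk1 hk2; omega
      · intro _ _ _
        have : (2:ℤ) ≤ (n.toNat : ℤ) := by rw [hq1cZ]; exact hn2
        exact_mod_cast this
    · -- recursive call
      have hUna : (U.natAbs : ℤ) = |U| := Int.abs_eq_natAbs U ▸ rfl
      have hUb : U.natAbs ≤ b := by
        have h1 : 1 ≤ |U| := Int.one_le_abs (by simpa using hU0)
        omega
      have hta : (2 * t - 1) * a ≤ 2 * v := by
        calc (2 * t - 1) * a = (2 * t - 1) * |u| := by rw [hadef]
        _ ≤ 2 * v := hbound
      have h2v : (2 * n - 1) * a ≤ 2 * v := by linarith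
      have hrec_bound : (2 * (n ^ 2 + 1) - 1) * |U| ≤ 2 * V := by
        have h1 : 2 * V = 2 * n * v + 2 * a := by rw [hVa]; ring
        nlinarith [hU2, h2v, ha1, hn2, abs_nonneg U]
      obtain ⟨N', q', δ', hN1, hδ'rng, hsum', ht', hchain', hge2'⟩ :=
        ih U V (n ^ 2 + 1) hU0 hUb hV0 (by nlinarith) hrec_bound
      refine ⟨N' + 1, fun k => if k = 1 then n.toNat else q' (k - 1),
        fun k => if k = 1 then δ else δ' (k - 1), by omega, ?_, ?_, ?_, ?_, ?_⟩
      · intro k hk1 hk2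
        by_cases h : k = 1
        · simp [h, hδ]
        · simp only [h, if_false]
          exact hδ'rng (k-1) (by omega) (by omega)
      · rw [sum_Icc_shift]
        simp only [if_true, eq_self_iff_true, if_pos]
        have hrw : ∀ k ∈ Finset.Icc 1 N',
            (((if k + 1 = 1 then δ else δ' (k + 1 - 1) : ℤ)) : ℝ) *
              Real.arctan (1 / (((if k + 1 = 1 then n.toNat else q' (k + 1 - 1) : ℕ)) : ℝ)) =
            (δ' k : ℝ) * Real.arctan (1 / (q' k : ℝ)) := by
          intro k hk
          have : k + 1 ≠ 1 := by
            simp only [Finset.mem_Icc] at hk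
            omega
          simp [this, show k ≠ 0 by omega]
        rw [Finset.sum_congr rfl hrw, hq1c, hstep, ← hUR, ← hVRc, hsum']
      · simp only [if_true, eq_self_iff_true, if_pos]
        rw [hq1cZ]
        exact hnt
      · intro k hk1 hk2
        by_cases h : k = 1
        · subst h
          simp only [if_true, eq_self_iff_true, if_pos, if_neg (by omega : ¬ (2:ℕ) = 1)]
          have h2 : (n : ℤ) ^ 2 + 1 ≤ (q' 1 : ℤ) := ht'
          have : ((n.toNat ^ 2 : ℕ) : ℤ) < ((q' 1 : ℕ) : ℤ) := by push_cast [hq1cZ]; nlinarith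
          exact_mod_cast this
        · simp only [if_neg h, if_neg (by omega : k + 1 ≠ 1)]
          have := hchain' (k - 1) (by omega) (by omega)
          have hke : k + 1 - 1 = (k - 1) + 1 := by omega
          rw [hke]
          exact this
      · intro k hk1 hk2
        by_cases h : k = 1
        · simp only [h, if_true, eq_self_iff_true, if_pos]
          have : (2:ℤ) ≤ (n.toNat : ℤ) := by rw [hq1cZ]; exact hn2
          exact_mod_cast this
        · simp only [h, if_false]
          exact hge2' (k - 1) (by omega) (by omega)

private lemma lehmer_bound (q₀ N : ℕ) (q : ℕ → ℕ) (hq₀ : 2 ≤ q₀) (hN : 1 ≤ N)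
    (hq1 : 2 * q₀ ≤ q 1) (hchain : ∀ k, 1 ≤ k → k < N → q k ^ 2 < q (k + 1))
    (hge2 : ∀ k, 1 ≤ k → k ≤ N → 2 ≤ q k) :
    1 / Real.logb 10 (q₀ : ℝ) + ∑ k ∈ Finset.Icc 1 N, 1 / Real.logb 10 ((q k : ℝ)) <
      3 / Real.logb 10 (q₀ : ℝ) := by
  have hb : (1:ℝ) < 10 := by norm_num
  have hq₀R : (1:ℝ) < (q₀ : ℝ) := by exact_mod_cast (by omega : 1 < q₀)
  have hL0 : 0 < Real.logb 10 (q₀ : ℝ) := Real.logb_pos hb hq₀R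
  have hq1R : ((q₀ : ℝ)) < (q 1 : ℝ) := by exact_mod_cast (by omega : q₀ < q 1)
  have hL1 : Real.logb 10 (q₀ : ℝ) < Real.logb 10 ((q 1 : ℕ) : ℝ) :=
    Real.logb_lt_logb hb (by linarith) hq1R
  have hL1pos : 0 < Real.logb 10 ((q 1 : ℕ) : ℝ) := lt_trans hL0 hL1
  have hLpos : ∀ k, 1 ≤ k → k ≤ N → 0 < Real.logb 10 ((q k : ℕ) : ℝ) := by
    intro k h1 h2
    apply Real.logb_pos hb
    exact_mod_cast (by have := hge2 k h1 h2; omega : 1 < q k)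
  -- geometric domination
  have hgeo : ∀ k, 1 ≤ k → k ≤ N →
      1 / Real.logb 10 ((q k : ℕ) : ℝ) ≤
        (1/2 : ℝ) ^ (k - 1) * (1 / Real.logb 10 ((q 1 : ℕ) : ℝ)) := by
    intro k
    induction k with
    | zero => omega
    | succ j ihj =>
      intro h1 h2
      rcases Nat.eq_zero_or_pos j with rfl | hj
      · simp
      · have hjN : j ≤ N := by omega
        have ihj' := ihj hj (by omega)
        have hLj := hLpos j hj hjN
        have hLj1 := hLpos (j+1) (by omega) h2
        have hmono : 2 * Real.logb 10 ((q j : ℕ) : ℝ) ≤ Real.logb 10 ((q (j+1) : ℕ) : ℝ) := by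
          have hsq : ((q j : ℕ) : ℝ) ^ 2 ≤ ((q (j+1) : ℕ) : ℝ) := by
            exact_mod_cast le_of_lt (hchain j hj (by omega))
          have h0 : (0:ℝ) < ((q j : ℕ) : ℝ) ^ 2 := by
            have := hge2 j hj hjN
            have : (0:ℝ) < ((q j : ℕ) : ℝ) := by exact_mod_cast (by omega : 0 < q j)
            positivity
          calc 2 * Real.logb 10 ((q j : ℕ) : ℝ) = Real.logb 10 (((q j : ℕ) : ℝ) ^ 2) := by
                rw [Real.logb_pow]; norm_num
          _ ≤ Real.logb 10 ((q (j+1) : ℕ) : ℝ) := by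
                apply (Real.logb_le_logb hb h0 (by linarith)).mpr hsq
        have step : 1 / Real.logb 10 ((q (j+1) : ℕ) : ℝ) ≤
            (1/2 : ℝ) * (1 / Real.logb 10 ((q j : ℕ) : ℝ)) := by
          rw [div_mul_div_comm, one_mul]
          exact one_div_le_one_div_of_le (by linarith) hmono
        have hpow : ((1:ℝ)/2) * (1/2 : ℝ) ^ (j - 1) = (1/2 : ℝ) ^ (j + 1 - 1) := by
          have : j + 1 - 1 = (j - 1) + 1 := by omega
          rw [this, pow_succ]
          ring
        calc 1 / Real.logb 10 ((q (j+1) : ℕ) : ℝ)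
            ≤ (1/2 : ℝ) * (1 / Real.logb 10 ((q j : ℕ) : ℝ)) := step
        _ ≤ (1/2 : ℝ) * ((1/2 : ℝ) ^ (j - 1) * (1 / Real.logb 10 ((q 1 : ℕ) : ℝ))) := by
              apply mul_le_mul_of_nonneg_left ihj' (by norm_num)
        _ = (1/2 : ℝ) ^ (j + 1 - 1) * (1 / Real.logb 10 ((q 1 : ℕ) : ℝ)) := by
              rw [← hpow]; ring
  have hsum : ∑ k ∈ Finset.Icc 1 N, 1 / Real.logb 10 ((q k : ℕ) : ℝ) ≤
      2 * (1 / Real.logb 10 ((q 1 : ℕ) : ℝ)) := by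
    calc ∑ k ∈ Finset.Icc 1 N, 1 / Real.logb 10 ((q k : ℕ) : ℝ)
        ≤ ∑ k ∈ Finset.Icc 1 N, (1/2 : ℝ) ^ (k - 1) * (1 / Real.logb 10 ((q 1 : ℕ) : ℝ)) := by
          apply Finset.sum_le_sum
          intro k hk
          simp only [Finset.mem_Icc] at hk
          exact hgeo k hk.1 hk.2
    _ = (∑ k ∈ Finset.Icc 1 N, (1/2 : ℝ) ^ (k - 1)) * (1 / Real.logb 10 ((q 1 : ℕ) : ℝ)) := by
          rw [Finset.sum_mul]
    _ ≤ 2 * (1 / Real.logb 10 ((q 1 : ℕ) : ℝ)) := by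
          apply mul_le_mul_of_nonneg_right _ (by positivity)
          rw [← Finset.Ico_add_one_right_eq_Icc, Finset.sum_Ico_eq_sum_range]
          simp only [Nat.succ_sub_one, Nat.add_sub_cancel]
          calc ∑ i ∈ Finset.range N, (1/2 : ℝ) ^ (1 + i - 1)
              = ∑ i ∈ Finset.range N, (1/2 : ℝ) ^ i := by
                apply Finset.sum_congr rfl
                intro i _
                congr 1
                omega
          _ ≤ 2 := sum_geometric_two_le N
  have hlt : 2 * (1 / Real.logb 10 ((q 1 : ℕ) : ℝ)) < 2 * (1 / Real.logb 10 (q₀ : ℝ)) := by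
    apply mul_lt_mul_of_pos_left _ (by norm_num)
    apply div_lt_div_of_pos_left (by norm_num) hL0 hL1
  have hid : 1 / Real.logb 10 (q₀ : ℝ) + 2 * (1 / Real.logb 10 (q₀ : ℝ)) =
      3 / Real.logb 10 (q₀ : ℝ) := by ring
  linarith

/-- For every natural number `q₀ ≥ 2` there is a Machin-like formula
`π/4 = m·arctan(1/q₀) + ∑_{k=1}^{N} δ k · arctan(1/q k)` whose denominators satisfy
`q 1 ≥ 2·q₀` and `q (k+1) > (q k)²` for `1 ≤ k < N`, and whose Lehmer measure satisfies
`1/log₁₀ q₀ + ∑_{k=1}^{N} 1/log₁₀ (q k) < 3/log₁₀ q₀`. -/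
theorem machin_like_formula_with_lehmer_bound (q₀ : ℕ) (hq₀ : 2 ≤ q₀) :
    ∃ (N : ℕ) (m : ℕ) (q : ℕ → ℕ) (δ : ℕ → ℤ),
      1 ≤ N ∧
      0 < m ∧
      (∀ k, 1 ≤ k → k ≤ N → δ k = 1 ∨ δ k = -1) ∧
      Real.pi / 4 = (m : ℝ) * Real.arctan (1 / (q₀ : ℝ)) +
        ∑ k ∈ Finset.Icc 1 N, (δ k : ℝ) * Real.arctan (1 / (q k : ℝ)) ∧
      2 * q₀ ≤ q 1 ∧
      (∀ k, 1 ≤ k → k < N → (q k) ^ 2 < q (k + 1)) ∧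
      1 / Real.logb 10 (q₀ : ℝ) + ∑ k ∈ Finset.Icc 1 N, 1 / Real.logb 10 ((q k : ℝ)) <
        3 / Real.logb 10 (q₀ : ℝ) := by
  obtain ⟨m, u, v, hm, hv, hu, habs, hangle⟩ := phase1 q₀ hq₀
  have hq' : (2 : ℤ) ≤ (q₀ : ℤ) := by exact_mod_cast hq₀
  have ht : (2:ℤ) ≤ 2 * (q₀ : ℤ) := by linarith
  have hbound : (2 * (2 * (q₀ : ℤ)) - 1) * |u| ≤ 2 * v := by
    nlinarith [abs_nonneg u]
  obtain ⟨N, q, δ, hN, hδrng, hsum, hq1, hchain, hge2⟩ :=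
    phase2 u.natAbs u v (2 * (q₀ : ℤ)) hu le_rfl hv ht hbound
  have hq1' : 2 * q₀ ≤ q 1 := by exact_mod_cast hq1
  refine ⟨N, m, q, δ, hN, hm, hδrng, ?_, hq1', hchain, ?_⟩
  · rw [hangle, hsum]
  · exact lehmer_bound q₀ N q hq₀ hN hq1' hchain hge2
end

section
/- For every natural number q₀ ≥ 2 and every integer m, it holds that π/4 ≠ m·arctan(1/q₀). -/
open Real Complex

namespace MachinAux

open Zsqrtd GaussianInt

set_option synthInstance.maxHeartbeats 1000000 in
/-- A Gaussian integer whose norm is prime is prime. -/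
lemma prime_of_norm_prime {P : GaussianInt} (h : Prime (Zsqrtd.norm P)) : Prime P := by
  rw [← UniqueFactorizationMonoid.irreducible_iff_prime]
  constructor
  · intro hu
    have h1 : (Zsqrtd.norm P).natAbs = 1 := Zsqrtd.norm_eq_one_iff.mpr hu
    exact h.not_unit (Int.isUnit_iff_natAbs_eq.mpr h1)
  · intro x y hxy
    have hn : Zsqrtd.norm P = Zsqrtd.norm x * Zsqrtd.norm y := by
      rw [hxy, Zsqrtd.norm_mul]
    rcases (h.irreducible.isUnit_or_isUnit hn) with hx | hy
    · exact Or.inl (Zsqrtd.norm_eq_one_iff.mp (Int.isUnit_iff_natAbs_eq.mp hx))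
    · exact Or.inr (Zsqrtd.norm_eq_one_iff.mp (Int.isUnit_iff_natAbs_eq.mp hy))

/-- Key divisibility lemma. -/
lemma aux (n : ℕ) (hn : n ≠ 0) (a : ℤ) (w P : GaussianInt)
    (hP : Prime P) (hP' : Prime (star P)) (h2 : ¬ (P ∣ 2)) (h2' : ¬ (star P ∣ 2))
    (hsum : w.re + w.im = 1)
    (heq : (⟨1,1⟩ : GaussianInt)^n * w^n = (a : GaussianInt) * ⟨1,1⟩)
    (hw : P ∣ w) : False := by
  set u : GaussianInt := ⟨1,1⟩ with hu_def
  have hu2 : u ∣ (2 : GaussianInt) := by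
    refine ⟨⟨1,-1⟩, ?_⟩
    ext <;> simp [hu_def, Zsqrtd.re_mul, Zsqrtd.im_mul]
  have hPu : ¬ P ∣ u := fun h => h2 (h.trans hu2)
  have hP'u : ¬ star P ∣ u := fun h => h2' (h.trans hu2)
  -- P divides a
  have hPa : P ∣ (a : GaussianInt) := by
    have h1 : P ∣ (a : GaussianInt) * u := by
      rw [← heq]
      exact Dvd.dvd.mul_left (dvd_pow hw hn) _
    rcases hP.dvd_or_dvd h1 with h | h
    · exact h
    · exact absurd h hPu
  -- star P divides a
  have hP'a : star P ∣ (a : GaussianInt) := by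
    obtain ⟨t, ht⟩ := hPa
    refine ⟨star t, ?_⟩
    have := congrArg star ht
    rwa [star_mul', show star ((a : GaussianInt)) = (a : GaussianInt) by
      ext <;> simp [Zsqrtd.re_star, Zsqrtd.im_star]] at this
  -- hence star P divides w
  have hP'w : star P ∣ w := by
    have h1 : star P ∣ u ^ n * w ^ n := by
      rw [heq]; exact hP'a.mul_right _
    rcases hP'.dvd_or_dvd h1 with h | h
    · exact absurd (hP'.dvd_of_dvd_pow h) hP'u
    · exact hP'.dvd_of_dvd_pow h
  -- so P divides star w
  have hPsw : P ∣ star w := by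
    obtain ⟨t, ht⟩ := hP'w
    refine ⟨star t, ?_⟩
    have := congrArg star ht
    rwa [star_mul', star_star] at this
  -- P divides 2*w.re and 2*w.im
  have hre : P ∣ ((2 * w.re : ℤ) : GaussianInt) := by
    have h1 : P ∣ w + star w := dvd_add hw hPsw
    rwa [show w + star w = ((2 * w.re : ℤ) : GaussianInt) by
      ext <;> simp [Zsqrtd.re_star, Zsqrtd.im_star, Zsqrtd.re_intCast, Zsqrtd.im_intCast]
      ring] at h1
  have him : P ∣ ((2 * w.im : ℤ) : GaussianInt) := by
    have h1 : P ∣ (w - star w) * ⟨0, -1⟩ := ((dvd_sub hw hPsw).mul_right _)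
    rwa [show (w - star w) * (⟨0, -1⟩ : GaussianInt) = ((2 * w.im : ℤ) : GaussianInt) by
      ext <;> simp [Zsqrtd.re_star, Zsqrtd.im_star, Zsqrtd.re_mul, Zsqrtd.im_mul,
        Zsqrtd.re_intCast, Zsqrtd.im_intCast]
      ring] at h1
  -- hence P divides 2
  have : P ∣ (2 : GaussianInt) := by
    have h1 := dvd_add hre him
    rwa [show ((2 * w.re : ℤ) : GaussianInt) + ((2 * w.im : ℤ) : GaussianInt)
        = (2 : GaussianInt) by
      push_cast
      rw [← mul_add, ← Int.cast_add, hsum, Int.cast_one, mul_one]] at h1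
  exact h2 this

end MachinAux

/-- For every natural number `q₀ ≥ 2` and every integer `m`, `π/4 ≠ m·arctan(1/q₀)`. -/
theorem no_single_term_machin (q₀ : ℕ) (hq₀ : 2 ≤ q₀) (m : ℤ) :
    Real.pi / 4 ≠ (m : ℝ) * Real.arctan (1 / (q₀ : ℝ)) := by
  intro heq
  have hq0R : (0:ℝ) < (q₀:ℝ) := by
    have : 0 < q₀ := by omega
    exact_mod_cast this
  set θ := Real.arctan (1 / (q₀ : ℝ)) with hθ
  have hθpos : 0 < θ := by
    rw [hθ, ← Real.arctan_zero]
    exact Real.arctan_strictMono (by positivity)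
  have hm : 0 < m := by
    by_contra h
    push_neg at h
    have hmR : (m:ℝ) ≤ 0 := by exact_mod_cast h
    nlinarith [Real.pi_pos]
  set n := m.toNat with hn_def
  have hnm : (n : ℤ) = m := Int.toNat_of_nonneg hm.le
  have hn0 : n ≠ 0 := by omega
  -- square root facts
  have hsqrt_pos : 0 < Real.sqrt ((q₀:ℝ)^2 + 1) := Real.sqrt_pos.mpr (by positivity)
  have hs : Real.sqrt (1 + (1/(q₀:ℝ))^2) = Real.sqrt ((q₀:ℝ)^2+1) / (q₀:ℝ) := by
    rw [eq_div_iff hq0R.ne']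
    nth_rewrite 2 [show (q₀:ℝ) = Real.sqrt ((q₀:ℝ)^2) by rw [Real.sqrt_sq hq0R.le]]
    rw [← Real.sqrt_mul (by positivity)]
    congr 1
    field_simp
  have hc : Real.sqrt ((q₀:ℝ)^2+1) * Real.cos θ = (q₀:ℝ) := by
    rw [hθ, Real.cos_arctan, hs]
    field_simp
  have hsn : Real.sqrt ((q₀:ℝ)^2+1) * Real.sin θ = 1 := by
    rw [hθ, Real.sin_arctan, hs]
    field_simp
  -- the key complex identity
  have hkey : ((q₀:ℝ) : ℂ) + Complex.I
      = (Real.sqrt ((q₀:ℝ)^2+1) : ℂ) * Complex.exp (θ * Complex.I) := by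
    rw [Complex.exp_mul_I, ← Complex.ofReal_cos, ← Complex.ofReal_sin, mul_add,
      ← Complex.ofReal_mul, ← mul_assoc, ← Complex.ofReal_mul, hc, hsn]
    simp
  have hnR : ((n:ℕ):ℝ) = (m:ℝ) := by exact_mod_cast hnm
  have hreal : (n:ℝ) * θ = Real.pi / 4 := by rw [hnR]; exact heq.symm
  have hexp : Complex.exp (((Real.pi/4 : ℝ)) * Complex.I)
      = ((Real.sqrt 2 / 2 : ℝ) : ℂ) * (1 + Complex.I) := by
    rw [Complex.exp_mul_I, ← Complex.ofReal_cos, ← Complex.ofReal_sin,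
        Real.cos_pi_div_four, Real.sin_pi_div_four]
    push_cast
    ring
  have hpow : (((q₀:ℝ):ℂ) + Complex.I)^n
      = (Real.sqrt ((q₀:ℝ)^2+1) : ℂ)^n * (((Real.sqrt 2 / 2 : ℝ)) : ℂ) * (1 + Complex.I) := by
    rw [hkey, mul_pow, ← Complex.exp_nat_mul, mul_assoc]
    congr 1
    rw [← hexp]
    congr 1
    rw [← mul_assoc]
    congr 1
    rw [show ((n:ℂ)) * ((θ:ℝ):ℂ) = (((n:ℝ) * θ : ℝ) : ℂ) by push_cast; ring, hreal]
  set R : ℝ := Real.sqrt ((q₀:ℝ)^2+1)^n * (Real.sqrt 2 / 2) with hR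
  have hfin : (((q₀:ℝ):ℂ) + Complex.I)^n = (R:ℂ) + (R:ℂ) * Complex.I := by
    rw [hpow, hR]
    push_cast
    ring
  -- move to Gaussian integers
  set z : GaussianInt := ⟨(q₀:ℤ), 1⟩ with hz
  have hzc : (GaussianInt.toComplex z) = ((q₀:ℝ):ℂ) + Complex.I := by
    rw [GaussianInt.toComplex_def]
    push_cast [hz]
    ring
  have hzn : GaussianInt.toComplex (z^n) = (R:ℂ) + (R:ℂ) * Complex.I := by
    rw [map_pow, hzc, hfin]
  set A : ℤ := (z^n).re with hA_def
  set B : ℤ := (z^n).im with hB_def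
  have hzn' : GaussianInt.toComplex (z^n) = ((A:ℝ):ℂ) + ((B:ℝ):ℂ) * Complex.I := by
    rw [GaussianInt.toComplex_def]
    push_cast
    ring
  have hAR : (A:ℝ) = R ∧ (B:ℝ) = R := by
    have h1 := hzn'.symm.trans hzn
    constructor
    · simpa using congrArg Complex.re h1
    · simpa using congrArg Complex.im h1
  have hAB : A = B := by
    exact_mod_cast hAR.1.trans hAR.2.symm
  have hzneq : z^n = (A : GaussianInt) * ⟨1,1⟩ := by
    ext
    · simp [Zsqrtd.re_mul, Zsqrtd.re_intCast, Zsqrtd.im_intCast, ← hA_def]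
    · simp [Zsqrtd.im_mul, Zsqrtd.re_intCast, Zsqrtd.im_intCast, ← hB_def, ← hAB]
  -- the Gaussian prime 1 + i
  have hu_norm : Zsqrtd.norm (⟨1,1⟩ : GaussianInt) = 2 := by
    rw [Zsqrtd.norm_def]
    norm_num
  have hu_prime : Prime (⟨1,1⟩ : GaussianInt) :=
    MachinAux.prime_of_norm_prime (by rw [hu_norm]; exact Int.prime_two)
  -- q₀ is odd
  have huz : (⟨1,1⟩ : GaussianInt) ∣ z := by
    apply hu_prime.dvd_of_dvd_pow (n := n)
    rw [hzneq]
    exact dvd_mul_left _ _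
  have h2norm : (2:ℤ) ∣ Zsqrtd.norm z := by
    obtain ⟨t, ht⟩ := huz
    rw [ht, Zsqrtd.norm_mul, hu_norm]
    exact Dvd.intro _ rfl
  have hznorm : Zsqrtd.norm z = (q₀:ℤ) * (q₀:ℤ) + 1 := by
    rw [hz, Zsqrtd.norm_def]
    ring
  have heven : Even ((q₀:ℤ) * (q₀:ℤ) + 1) := by
    rw [hznorm] at h2norm
    obtain ⟨t, ht⟩ := h2norm
    exact ⟨t, by omega⟩
  have hoddq : Odd q₀ := by
    have h1 : ¬ Even ((q₀:ℤ) * (q₀:ℤ)) := by rwa [Int.even_add_one] at heven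
    have h2 : ¬ Even ((q₀:ℤ)) := fun h => h1 (h.mul_right _)
    rw [Int.not_even_iff_odd, Int.odd_coe_nat] at h2
    exact h2
  obtain ⟨k, hk⟩ := hoddq
  have hk1 : 1 ≤ k := by omega
  -- the factor w with z = (1+i) * w
  set w : GaussianInt := ⟨(k:ℤ)+1, -(k:ℤ)⟩ with hw_def
  have huw : z = (⟨1,1⟩ : GaussianInt) * w := by
    ext
    · rw [hz, hw_def]
      simp [Zsqrtd.re_mul]
      push_cast [hk]
      ring
    · rw [hz, hw_def]
      simp [Zsqrtd.im_mul]
  set s : ℕ := (k+1)*(k+1) + k*k with hs_def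
  have hst : s = 2*(k*k+k)+1 := by rw [hs_def]; ring
  have hnorm_w : Zsqrtd.norm w = (s:ℤ) := by
    rw [hw_def, Zsqrtd.norm_def, hs_def]
    push_cast
    ring
  have hs1 : s ≠ 1 := by
    have : 1 ≤ k*k := Nat.one_le_iff_ne_zero.mpr (by positivity)
    omega
  set p : ℕ := s.minFac with hp_def
  have hp : p.Prime := Nat.minFac_prime hs1
  have hps : p ∣ s := Nat.minFac_dvd s
  have hp2 : p ≠ 2 := by
    intro h
    rw [h] at hps
    omega
  have h2s : q₀ * q₀ + 1 = 2 * s := by rw [hk, hs_def]; ring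
  have hpq : p ∣ q₀ * q₀ + 1 := by rw [h2s]; exact hps.mul_left 2
  haveI : Fact p.Prime := ⟨hp⟩
  -- -1 is a square mod p
  have hzero : ((q₀ * q₀ + 1 : ℕ) : ZMod p) = 0 :=
    (ZMod.natCast_eq_zero_iff _ _).mpr hpq
  have hsq : IsSquare (-1 : ZMod p) := by
    refine ⟨(q₀ : ZMod p), ?_⟩
    push_cast at hzero
    linear_combination -hzero
  have hp43 : p % 4 ≠ 3 := ZMod.exists_sq_eq_neg_one_iff.mp hsq
  obtain ⟨c, d, hcd⟩ := Nat.Prime.sq_add_sq hp43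
  -- the Gaussian prime P over p
  set P : GaussianInt := ⟨(c:ℤ), (d:ℤ)⟩ with hP_def
  have hPnorm : Zsqrtd.norm P = (p:ℤ) := by
    rw [hP_def, Zsqrtd.norm_def, ← hcd]
    push_cast
    ring
  have hP'norm : Zsqrtd.norm (star P) = (p:ℤ) := by rw [Zsqrtd.norm_conj, hPnorm]
  have hp_int : Prime ((p:ℤ)) := Nat.prime_iff_prime_int.mp hp
  have hPprime : Prime P := MachinAux.prime_of_norm_prime (by rw [hPnorm]; exact hp_int)
  have hP'prime : Prime (star P) := MachinAux.prime_of_norm_prime (by rw [hP'norm]; exact hp_int)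
  -- neither P nor star P divides 2
  have h2norm' : Zsqrtd.norm (2 : GaussianInt) = 4 := by
    rw [Zsqrtd.norm_def, Zsqrtd.re_ofNat, Zsqrtd.im_ofNat]
    norm_num
  have hnotdvd : ∀ Q : GaussianInt, Zsqrtd.norm Q = (p:ℤ) → ¬ Q ∣ (2 : GaussianInt) := by
    intro Q hQ hdvd
    obtain ⟨t, ht⟩ := hdvd
    have h4 : (4:ℤ) = (p:ℤ) * Zsqrtd.norm t := by
      rw [← hQ, ← Zsqrtd.norm_mul, ← ht, h2norm']
    have hpd4 : (p:ℤ) ∣ (4:ℤ) := ⟨_, h4⟩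
    have hpd4' : p ∣ 4 := by exact_mod_cast hpd4
    have : p ∣ 2 := hp.dvd_of_dvd_pow (n := 2) (by norm_num at hpd4' ⊢; exact hpd4')
    have := Nat.le_of_dvd (by norm_num) this
    have := hp.two_le
    omega
  have hP2 : ¬ P ∣ (2 : GaussianInt) := hnotdvd P hPnorm
  have hP'2 : ¬ star P ∣ (2 : GaussianInt) := hnotdvd (star P) hP'norm
  -- P divides w * star w
  have hPp : P * star P = ((p:ℤ) : GaussianInt) := by
    rw [← hPnorm, Zsqrtd.norm_eq_mul_conj]
  have hPs : P ∣ ((s:ℤ) : GaussianInt) := by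
    refine dvd_trans ⟨star P, hPp.symm⟩ ?_
    exact (Zsqrtd.intCast_dvd_intCast _ _).mpr (by exact_mod_cast hps)
  have hww : ((s:ℤ) : GaussianInt) = w * star w := by
    rw [← hnorm_w, Zsqrtd.norm_eq_mul_conj]
  have hsum : w.re + w.im = 1 := by rw [hw_def]; ring
  have hfac : (⟨1,1⟩ : GaussianInt)^n * w^n = (A : GaussianInt) * ⟨1,1⟩ := by
    rw [← mul_pow, ← huw]
    exact hzneq
  rw [hww] at hPs
  rcases hPprime.dvd_or_dvd hPs with hPw | hPsw
  · exact MachinAux.aux n hn0 A w P hPprime hP'prime hP2 hP'2 hsum hfac hPw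
  · have hP'w : star P ∣ w := by
      obtain ⟨t, ht⟩ := hPsw
      refine ⟨star t, ?_⟩
      have := congrArg star ht
      rwa [star_star, star_mul'] at this
    exact MachinAux.aux n hn0 A w (star P) hP'prime (by rwa [star_star]) hP'2 (by rw [star_star]; exact hP2) hsum hfac hP'w
end

section
/- Let q₀ be a natural number with q₀ ≥ 2 and set γ = (π/4)/arctan(1/q₀). Then 0 < π/4 − ⌊γ⌋·arctan(1/q₀) < arctan(1/q₀), and π/4 − ⌈γ⌉·arctan(1/q₀) < 0. -/
open Real Complex

/-- Divisibility invariant: for `z = q + i` in the Gaussian integers,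
`(Re(z^(n+1)) - Im(z^(n+1)))^2 ≡ 1` and `(Re + Im)^2 ≡ 1` mod `q`. -/
lemma gauss_pow_mod (q : ℤ) (n : ℕ) :
    q ∣ (((⟨q, 1⟩ : GaussianInt) ^ (n + 1)).re - ((⟨q, 1⟩ : GaussianInt) ^ (n + 1)).im) ^ 2 - 1 ∧
    q ∣ (((⟨q, 1⟩ : GaussianInt) ^ (n + 1)).re + ((⟨q, 1⟩ : GaussianInt) ^ (n + 1)).im) ^ 2 - 1 := by
  induction n with
  | zero =>
    constructor
    · exact ⟨q - 2, by simp [Zsqrtd.ext_iff]; ring⟩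
    · exact ⟨q + 2, by simp [Zsqrtd.ext_iff]; ring⟩
  | succ n ih =>
    obtain ⟨⟨k, hk⟩, ⟨l, hl⟩⟩ := ih
    set z : GaussianInt := ⟨q, 1⟩ with hz
    have hre : (z ^ (n + 2)).re = (z ^ (n + 1)).re * q - (z ^ (n + 1)).im := by
      rw [pow_succ]
      simp [Zsqrtd.re_mul, hz]
      try ring
    have him : (z ^ (n + 2)).im = (z ^ (n + 1)).re + (z ^ (n + 1)).im * q := by
      rw [pow_succ]
      simp [Zsqrtd.im_mul, hz]
      try ring
    set C := (z ^ (n + 1)).re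
    set S := (z ^ (n + 1)).im
    constructor
    · refine ⟨q * (C - S) ^ 2 - 2 * (C - S) * (C + S) + l, ?_⟩
      rw [hre, him]
      have : ((C * q - S) - (C + S * q)) ^ 2 - 1
          = q * (q * (C - S) ^ 2 - 2 * (C - S) * (C + S)) + ((C + S) ^ 2 - 1) := by ring
      rw [this, hl]; ring
    · refine ⟨q * (C + S) ^ 2 + 2 * (C + S) * (C - S) + k, ?_⟩
      rw [hre, him]
      have : ((C * q - S) + (C + S * q)) ^ 2 - 1
          = q * (q * (C + S) ^ 2 + 2 * (C + S) * (C - S)) + ((C - S) ^ 2 - 1) := by ring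
      rw [this, hk]; ring

/-- For `q ≥ 2`, `π/4` is not an integer multiple of `arctan (1/q)`. -/
lemma pi_div_four_ne_int_mul_arctan (q : ℕ) (hq : 2 ≤ q) (n : ℤ) :
    Real.pi / 4 ≠ (n : ℝ) * Real.arctan (1 / (q : ℝ)) := by
  intro h
  have hq0 : (0 : ℝ) < q := by positivity
  have hθpos : 0 < Real.arctan (1 / (q : ℝ)) := by
    have := Real.arctan_strictMono (show (0:ℝ) < 1 / (q:ℝ) by positivity)
    simpa [Real.arctan_zero] using this
  have hn0 : 0 < n := by
    by_contra hn
    push_neg at hn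
    have : (n : ℝ) * Real.arctan (1 / (q : ℝ)) ≤ 0 :=
      mul_nonpos_of_nonpos_of_nonneg (by exact_mod_cast hn) hθpos.le
    nlinarith [Real.pi_pos]
  obtain ⟨m, hm⟩ : ∃ m : ℕ, n = (m : ℤ) + 1 := ⟨(n - 1).toNat, by omega⟩
  set θ := Real.arctan (1 / (q : ℝ)) with hθ
  have hcos : Real.cos θ ≠ 0 := (Real.cos_arctan_pos _).ne'
  have htan : Real.sin θ / Real.cos θ = 1 / (q : ℝ) := by
    rw [← Real.tan_eq_sin_div_cos, hθ, Real.tan_arctan]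
  -- q + I = (q / cos θ) * exp (θ I)
  have hbase : (q : ℂ) + Complex.I = ((q / Real.cos θ : ℝ) : ℂ) * Complex.exp (θ * Complex.I) := by
    rw [Complex.exp_mul_I]
    rw [← Complex.ofReal_cos, ← Complex.ofReal_sin]
    have hcosC : ((Real.cos θ : ℝ) : ℂ) ≠ 0 := by exact_mod_cast hcos
    have hsin : ((Real.sin θ : ℝ) : ℂ) = ((Real.cos θ : ℝ) : ℂ) / (q : ℂ) := by
      have : Real.sin θ = Real.cos θ / (q : ℝ) := by
        field_simp at htan ⊢
        linarith [htan]
      rw [this]; push_cast; ring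
    rw [hsin]
    have hqC : (q : ℂ) ≠ 0 := by exact_mod_cast hq0.ne'
    have hcosC' : Complex.cos (θ : ℂ) ≠ 0 := by rw [← Complex.ofReal_cos]; exact hcosC
    rw [Complex.ofReal_div]
    push_cast
    field_simp
  -- raise to the power m+1
  have hpow : ((q : ℂ) + Complex.I) ^ (m + 1)
      = ((q / Real.cos θ : ℝ) : ℂ) ^ (m + 1) * Complex.exp ((Real.pi / 4 : ℝ) * Complex.I) := by
    have hang : (((m + 1 : ℕ) : ℝ)) * θ = Real.pi / 4 := by
      rw [h, hm]; push_cast; ring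
    rw [hbase, mul_pow, ← Complex.exp_nat_mul]
    congr 1
    rw [show ((m + 1 : ℕ) : ℂ) * ((θ : ℂ) * Complex.I)
        = ((((m + 1 : ℕ) : ℝ) * θ : ℝ) : ℂ) * Complex.I by push_cast; ring, hang]
  have hre_im : (((q : ℂ) + Complex.I) ^ (m + 1)).re = (((q : ℂ) + Complex.I) ^ (m + 1)).im := by
    have hpow' : ((q : ℂ) + Complex.I) ^ (m + 1)
        = ((((q / Real.cos θ) ^ (m + 1) : ℝ)) : ℂ) * Complex.exp ((Real.pi / 4 : ℝ) * Complex.I) := by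
      rw [hpow]; push_cast; ring
    have key : ∀ r : ℝ, ((r : ℂ) * Complex.exp ((Real.pi / 4 : ℝ) * Complex.I)).re
        = ((r : ℂ) * Complex.exp ((Real.pi / 4 : ℝ) * Complex.I)).im := by
      intro r
      rw [Complex.exp_mul_I, ← Complex.ofReal_cos, ← Complex.ofReal_sin]
      simp [Complex.mul_re, Complex.mul_im, Real.cos_pi_div_four, Real.sin_pi_div_four]
    rw [hpow']
    exact key _
  -- transfer to Gaussian integers
  set z : GaussianInt := ⟨(q : ℤ), 1⟩ with hz
  have hzc : (z : ℂ) = (q : ℂ) + Complex.I := by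
    rw [hz, GaussianInt.toComplex_def']; push_cast; ring
  have hCS : ((z ^ (m + 1)).re : ℤ) = ((z ^ (m + 1)).im : ℤ) := by
    have h1 : (((z ^ (m + 1) : GaussianInt) : ℂ)).re = (((z ^ (m + 1) : GaussianInt) : ℂ)).im := by
      rw [map_pow, hzc]; exact hre_im
    have h2 := GaussianInt.intCast_re (z ^ (m + 1))
    have h3 := GaussianInt.intCast_im (z ^ (m + 1))
    exact_mod_cast h2.trans (h1.trans h3.symm)
  have hdvd := (gauss_pow_mod (q : ℤ) m).1
  rw [hCS, sub_self] at hdvd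
  have h1 : (q : ℤ) ∣ 1 := by
    have : ((0:ℤ) ^ 2 - 1) = -1 := by norm_num
    rw [this] at hdvd
    exact dvd_neg.mp hdvd
  have := Int.le_of_dvd one_pos h1
  omega

/-- For `q₀ ≥ 2` and `γ = (π/4)/arctan(1/q₀)`:
`0 < π/4 − ⌊γ⌋·arctan(1/q₀) < arctan(1/q₀)` and `π/4 − ⌈γ⌉·arctan(1/q₀) < 0`. -/
theorem floor_ceil_remainder (q₀ : ℕ) (hq₀ : 2 ≤ q₀)
    (γ : ℝ) (hγ : γ = (Real.pi / 4) / Real.arctan (1 / (q₀ : ℝ))) :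
    0 < Real.pi / 4 - (⌊γ⌋ : ℝ) * Real.arctan (1 / (q₀ : ℝ)) ∧
    Real.pi / 4 - (⌊γ⌋ : ℝ) * Real.arctan (1 / (q₀ : ℝ)) < Real.arctan (1 / (q₀ : ℝ)) ∧
    Real.pi / 4 - (⌈γ⌉ : ℝ) * Real.arctan (1 / (q₀ : ℝ)) < 0 := by
  set θ := Real.arctan (1 / (q₀ : ℝ)) with hθ
  have hq0 : (0 : ℝ) < q₀ := by positivity
  have hθpos : 0 < θ := by
    have := Real.arctan_strictMono (show (0:ℝ) < 1 / (q₀:ℝ) by positivity)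
    simpa [Real.arctan_zero, hθ] using this
  have hγθ : γ * θ = Real.pi / 4 := by
    rw [hγ]; field_simp
  have hnotint : ∀ n : ℤ, γ ≠ (n : ℝ) := by
    intro n hn
    apply pi_div_four_ne_int_mul_arctan q₀ hq₀ n
    rw [← hγθ, hn]
  have hfloor : (⌊γ⌋ : ℝ) < γ := (Int.floor_le γ).lt_of_ne fun h => hnotint ⌊γ⌋ h.symm
  have hceil : γ < (⌈γ⌉ : ℝ) := (Int.le_ceil γ).lt_of_ne fun h => hnotint ⌈γ⌉ h
  refine ⟨?_, ?_, ?_⟩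
  · rw [← hγθ]
    nlinarith
  · rw [← hγθ]
    have h1 : γ - (⌊γ⌋ : ℝ) < 1 := by
      have := Int.sub_one_lt_floor γ
      linarith
    nlinarith
  · rw [← hγθ]
    nlinarith
end

section
/- Let q₀ be a natural number with q₀ ≥ 2, set γ = (π/4)/arctan(1/q₀), and let m = round(γ) be the integer nearest to γ. Then 0 < |π/4 − m·arctan(1/q₀)| ≤ (1/2)·arctan(1/q₀). -/
open Real

/-- Mod-`q` invariants of `(q + i)^n` in the Gaussian integers. -/
lemma gauss_pow_invariant (q : ℤ) (n : ℕ) :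
    q ∣ (((⟨q, 1⟩ : GaussianInt)) ^ n).re * (((⟨q, 1⟩ : GaussianInt)) ^ n).im ∧
    q ∣ ((((⟨q, 1⟩ : GaussianInt)) ^ n).re ^ 2 + (((⟨q, 1⟩ : GaussianInt)) ^ n).im ^ 2 - 1) := by
  induction n with
  | zero => simp [Zsqrtd.re_one, Zsqrtd.im_one]
  | succ n ih =>
    obtain ⟨h1, h2⟩ := ih
    set a := (((⟨q, 1⟩ : GaussianInt)) ^ n).re with ha
    set b := (((⟨q, 1⟩ : GaussianInt)) ^ n).im with hb
    have hre : (((⟨q, 1⟩ : GaussianInt)) ^ (n + 1)).re = a * q - b := by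
      rw [pow_succ, Zsqrtd.re_mul]; ring
    have him : (((⟨q, 1⟩ : GaussianInt)) ^ (n + 1)).im = a + b * q := by
      rw [pow_succ, Zsqrtd.im_mul]; ring
    rw [hre, him]
    constructor
    · have : (a * q - b) * (a + b * q) = q * (a ^ 2 - b ^ 2) + (q ^ 2 - 1) * (a * b) := by ring
      rw [this]
      exact dvd_add (Dvd.intro _ rfl) (Dvd.dvd.mul_left h1 _)
    · have : (a * q - b) ^ 2 + (a + b * q) ^ 2 - 1 =
        (q ^ 2 + 1) * (a ^ 2 + b ^ 2 - 1) + q * q := by ring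
      rw [this]
      exact dvd_add (Dvd.dvd.mul_left h2 _) (Dvd.intro _ rfl)

/-- For `q ≥ 2` and `n ≥ 1`, `π/4 ≠ n · arctan (1/q)`. -/
lemma pi_div_four_ne (q : ℕ) (hq : 2 ≤ q) (n : ℕ)
    (h : Real.pi / 4 = (n : ℝ) * Real.arctan (1 / (q : ℝ))) : False := by
  have hq0 : (0 : ℝ) < (q : ℝ) := by positivity
  set θ := Real.arctan (1 / (q : ℝ)) with hθ
  set c := Real.sqrt (1 + (1 / (q : ℝ)) ^ 2) with hc
  have hcpos : 0 < c := Real.sqrt_pos.2 (by positivity)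
  have hcos : Real.cos θ = 1 / c := Real.cos_arctan _
  have hsin : Real.sin θ = (1 / (q : ℝ)) / c := Real.sin_arctan _
  -- key complex identity : q + i = (q*c) * exp(θ i)
  have hq' : (q : ℝ) ≠ 0 := hq0.ne'
  have hc' : c ≠ 0 := hcpos.ne'
  have hkey : ((q : ℂ) + Complex.I) = (((q : ℝ) * c : ℝ) : ℂ) * Complex.exp (θ * Complex.I) := by
    rw [Complex.exp_mul_I, ← Complex.ofReal_cos, ← Complex.ofReal_sin, hcos, hsin]
    apply Complex.ext <;> simp <;> field_simp
  set z : GaussianInt := ⟨(q : ℤ), 1⟩ with hz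
  have hzc : (z : ℂ) = (q : ℂ) + Complex.I := by
    rw [hz, GaussianInt.toComplex_def]; push_cast; ring
  have hpow : ((z ^ n : GaussianInt) : ℂ) = (((q : ℝ) * c) ^ n : ℝ) * Complex.exp ((Real.pi / 4 : ℝ) * Complex.I) := by
    rw [map_pow, hzc, hkey, mul_pow, ← Complex.exp_nat_mul]
    push_cast
    rw [show (n : ℂ) * ((θ : ℝ) * Complex.I) = ((n : ℝ) * θ : ℝ) * Complex.I by push_cast; ring, ← h]
    norm_cast
    simp
  have hre : ((z ^ n : GaussianInt) : ℂ).re = ((q : ℝ) * c) ^ n * Real.cos (Real.pi / 4) := by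
    rw [hpow, Complex.exp_mul_I, ← Complex.ofReal_cos, ← Complex.ofReal_sin]
    simp [← Complex.ofReal_pow]
  have him : ((z ^ n : GaussianInt) : ℂ).im = ((q : ℝ) * c) ^ n * Real.sin (Real.pi / 4) := by
    rw [hpow, Complex.exp_mul_I, ← Complex.ofReal_cos, ← Complex.ofReal_sin]
    simp [← Complex.ofReal_pow]
  have hreim : ((z ^ n : GaussianInt) : ℂ).re = ((z ^ n : GaussianInt) : ℂ).im := by
    rw [hre, him, Real.cos_pi_div_four, Real.sin_pi_div_four]
  have heq : ((z ^ n).re : ℤ) = (z ^ n).im := by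
    have h1 := GaussianInt.intCast_re (z ^ n)
    have h2 := GaussianInt.intCast_im (z ^ n)
    exact_mod_cast h1.trans (hreim.trans h2.symm)
  obtain ⟨d1, d2⟩ := gauss_pow_invariant (q : ℤ) n
  rw [← hz] at d1 d2
  rw [heq] at d1 d2
  have : (q : ℤ) ∣ 1 := by
    have : (1 : ℤ) = 2 * ((z ^ n).im * (z ^ n).im) - ((z ^ n).im ^ 2 + (z ^ n).im ^ 2 - 1) := by ring
    rw [this]
    exact dvd_sub (Dvd.dvd.mul_left d1 _) d2
  have := Int.le_of_dvd one_pos this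
  omega

/-- For `q₀ ≥ 2`, `γ = (π/4)/arctan(1/q₀)` and `m = round γ` the nearest integer to `γ`:
`0 < |π/4 − m·arctan(1/q₀)| ≤ (1/2)·arctan(1/q₀)`. -/
theorem round_remainder_bound (q₀ : ℕ) (hq₀ : 2 ≤ q₀)
    (γ : ℝ) (hγ : γ = (Real.pi / 4) / Real.arctan (1 / (q₀ : ℝ)))
    (m : ℤ) (hm : m = round γ) :
    0 < |Real.pi / 4 - (m : ℝ) * Real.arctan (1 / (q₀ : ℝ))| ∧
    |Real.pi / 4 - (m : ℝ) * Real.arctan (1 / (q₀ : ℝ))| ≤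
      (1 / 2) * Real.arctan (1 / (q₀ : ℝ)) := by
  have hq0 : (0 : ℝ) < (q₀ : ℝ) := by positivity
  set θ := Real.arctan (1 / (q₀ : ℝ)) with hθ
  have hθpos : 0 < θ := by
    rw [hθ, ← Real.arctan_zero]
    exact Real.arctan_strictMono (by positivity)
  have hγθ : γ * θ = Real.pi / 4 := by
    rw [hγ]; field_simp
  have hfact : Real.pi / 4 - (m : ℝ) * θ = θ * (γ - m) := by
    rw [← hγθ]; ring
  constructor
  · rw [abs_pos]
    intro h0
    have heq : Real.pi / 4 = (m : ℝ) * θ := by linarith [sub_eq_zero.1 h0]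
    -- m ≥ 1
    have hθlt : θ < Real.pi / 4 := by
      rw [hθ, ← Real.arctan_one]
      apply Real.arctan_strictMono
      rw [div_lt_one hq0]
      exact_mod_cast hq₀
    have hγ1 : 1 < γ := by
      rw [hγ]
      rw [lt_div_iff₀ hθpos]
      linarith
    have hm1 : 1 ≤ m := by
      rw [hm]
      rw [round_eq, Int.le_floor]
      push_cast
      linarith
    have hmn : ((m.toNat : ℤ) : ℝ) = (m : ℝ) := by
      rw [Int.toNat_of_nonneg (by omega)]
    have hmn' : ((m.toNat : ℕ) : ℝ) = (m : ℝ) := by exact_mod_cast hmn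
    exact pi_div_four_ne q₀ hq₀ m.toNat (by rw [heq, hθ, hmn'])
  · rw [hfact, abs_mul, abs_of_pos hθpos, hm]
    have := abs_sub_round γ
    calc θ * |γ - (round γ : ℝ)| ≤ θ * (1 / 2) := by
          exact mul_le_mul_of_nonneg_left this hθpos.le
      _ = (1 / 2) * θ := by ring
end

section
/- Let Aₙ, Bₙ, qₙ, A', B', q' be real numbers with Aₙ > 0, Bₙ > 0, qₙ > 0, A' > 0, such that qₙ ≤ Bₙ/Aₙ + 1/2, A' ≤ Aₙ/2, B' = qₙ·Bₙ + Aₙ, and q' ≥ B'/A' − 1/2. Then q' > qₙ². -/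
/-- One step of the recurrence: if `Aₙ, Bₙ, qₙ, A' > 0` with `qₙ ≤ Bₙ/Aₙ + 1/2`,
`A' ≤ Aₙ/2`, `B' = qₙ·Bₙ + Aₙ`, and `q' ≥ B'/A' − 1/2`, then `q' > qₙ²`. -/
theorem next_q_gt_sq (An Bn qn A' B' q' : ℝ)
    (hAn : 0 < An) (hBn : 0 < Bn) (hqn : 0 < qn) (hA' : 0 < A')
    (hqn_le : qn ≤ Bn / An + 1 / 2)
    (hA'_le : A' ≤ An / 2)
    (hB' : B' = qn * Bn + An)
    (hq' : B' / A' - 1 / 2 ≤ q') :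
    qn ^ 2 < q' := by
  have h1 : (qn - 1/2) * An ≤ Bn := by
    have := mul_le_mul_of_nonneg_right (sub_le_sub_right hqn_le (1/2)) hAn.le
    rw [add_sub_cancel_right, div_mul_cancel₀ _ hAn.ne'] at this
    linarith
  have h2 : B' ≤ A' * (q' + 1/2) := by
    rw [sub_le_iff_le_add] at hq'
    calc B' = B' / A' * A' := by field_simp
      _ ≤ (q' + 1/2) * A' := mul_le_mul_of_nonneg_right (by linarith) hA'.le
      _ = A' * (q' + 1/2) := mul_comm _ _
  nlinarith [mul_le_mul_of_nonneg_left h1 hqn.le, mul_pos hqn hBn,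
    sq_nonneg (qn - 1), mul_pos hAn hqn, sq_nonneg qn]
end

section
/- Let N ≥ 1 and let q₀, q₁, ..., q_N be natural numbers with q₀ ≥ 2, q₁ ≥ 2·q₀, and q_{n+1} > q_n² for all 1 ≤ n < N. Then the Lehmer measure satisfies Σ_{n=0}^{N} 1/log₁₀(q_n) < 3/log₁₀(q₀). -/
/-- If `N ≥ 1`, `q 0 ≥ 2`, `q 1 ≥ 2·q 0`, and `q (n+1) > (q n)²` for `1 ≤ n < N`, then the
Lehmer measure satisfies `∑_{n=0}^{N} 1/log₁₀ (q n) < 3/log₁₀ (q 0)`. -/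
theorem lehmer_measure_lt_three (N : ℕ) (hN : 1 ≤ N) (q : ℕ → ℕ)
    (hq0 : 2 ≤ q 0) (hq1 : 2 * q 0 ≤ q 1)
    (hrec : ∀ n, 1 ≤ n → n < N → (q n) ^ 2 < q (n + 1)) :
    ∑ n ∈ Finset.range (N + 1), 1 / Real.logb 10 ((q n : ℝ)) <
      3 / Real.logb 10 ((q 0 : ℝ)) := by
  have hq2 : ∀ n, n ≤ N → 2 ≤ q n := by
    intro n hn
    induction n with
    | zero => exact hq0
    | succ m ih =>
      rcases Nat.eq_zero_or_pos m with hm | hm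
      · subst hm; simp only [Nat.zero_add]; omega
      · have h := hrec m hm (by omega)
        have h2 : 2 ≤ q m := ih (by omega)
        nlinarith
  set a := Real.log ((q 0 : ℝ)) with ha
  have ha0 : 0 < a := by
    have h2 : (2:ℝ) ≤ ((q 0 : ℝ)) := by exact_mod_cast hq0
    exact Real.log_pos (by linarith)
  set b := Real.log 2 + a with hb
  have hl2 : (0:ℝ) < Real.log 2 := Real.log_pos (by norm_num)
  have hb0 : 0 < b := by positivity
  have hab : a < b := by simp [hb]; linarith
  -- log (q (1+i)) ≥ b * 2^i for i < N
  have hlog : ∀ i, i < N → b * 2 ^ i ≤ Real.log ((q (1 + i) : ℝ)) := by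
    intro i hi
    induction i with
    | zero =>
      simp only [pow_zero, mul_one]
      have hcast : ((2 * q 0 : ℕ) : ℝ) ≤ ((q 1 : ℝ)) := by exact_mod_cast hq1
      have h1 : Real.log ((2 * q 0 : ℕ) : ℝ) ≤ Real.log ((q 1 : ℝ)) := by
        apply Real.log_le_log (by positivity) hcast
      have h2 : Real.log ((2 * q 0 : ℕ) : ℝ) = Real.log 2 + a := by
        push_cast
        rw [Real.log_mul (by norm_num) (by positivity)]
      show Real.log 2 + a ≤ Real.log ((q (1 + 0) : ℝ))
      rw [← h2]
      simpa using h1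
    | succ m ih =>
      have hm : m < N := by omega
      have hqm : 2 ≤ q (1 + m) := hq2 _ (by omega)
      have hstep := hrec (1 + m) (by omega) (by omega)
      have hcast : ((q (1 + m) : ℝ)) ^ 2 ≤ ((q (1 + m + 1) : ℝ)) := by
        have : ((q (1 + m)) ^ 2 : ℕ) ≤ q (1 + m + 1) := le_of_lt hstep
        exact_mod_cast this
      have hpos : (0:ℝ) < ((q (1 + m) : ℝ)) ^ 2 := by
        have : (0:ℝ) < ((q (1 + m) : ℝ)) := by exact_mod_cast Nat.lt_of_lt_of_le (by norm_num) hqm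
        positivity
      have h1 : Real.log (((q (1 + m) : ℝ)) ^ 2) ≤ Real.log ((q (1 + m + 1) : ℝ)) :=
        Real.log_le_log hpos hcast
      rw [Real.log_pow] at h1
      have h3 : (1 + (m + 1)) = (1 + m + 1) := by ring
      rw [h3]
      calc b * 2 ^ (m + 1) = 2 * (b * 2 ^ m) := by ring
        _ ≤ 2 * Real.log ((q (1 + m) : ℝ)) := by linarith [ih hm]
        _ ≤ Real.log ((q (1 + m + 1) : ℝ)) := by simpa using h1
  have key : ∑ n ∈ Finset.range (N + 1), 1 / Real.log ((q n : ℝ)) < 3 / a := by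
    rw [Finset.sum_range_succ']
    have hbound : ∑ i ∈ Finset.range N, 1 / Real.log ((q (i + 1) : ℝ)) ≤ 2 / b := by
      calc ∑ i ∈ Finset.range N, 1 / Real.log ((q (i + 1) : ℝ))
          ≤ ∑ i ∈ Finset.range N, ((1:ℝ)/2) ^ i / b := by
            apply Finset.sum_le_sum
            intro i hi
            have hi' : i < N := Finset.mem_range.mp hi
            have hl := hlog i hi'
            have hpos : (0:ℝ) < b * 2 ^ i := by positivity
            have h1 : 1 / Real.log ((q (1 + i) : ℝ)) ≤ 1 / (b * 2 ^ i) :=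
              one_div_le_one_div_of_le hpos hl
            have h2 : (1:ℝ) / (b * 2 ^ i) = ((1:ℝ)/2) ^ i / b := by
              rw [one_div_pow]
              field_simp
            rw [add_comm 1 i] at h1
            linarith [h1, h2.ge, h2.le]
        _ = (∑ i ∈ Finset.range N, ((1:ℝ)/2) ^ i) / b := by
            rw [Finset.sum_div]
        _ ≤ 2 / b := by
            gcongr
            exact sum_geometric_two_le N
    have h20 : Real.log ((q 0 : ℝ)) = a := rfl
    have : (2:ℝ) / b < 2 / a := by
      apply div_lt_div_of_pos_left (by norm_num) ha0 hab
    calc ∑ i ∈ Finset.range N, 1 / Real.log ((q (i + 1) : ℝ)) + 1 / Real.log ((q 0 : ℝ))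
        ≤ 2 / b + 1 / a := by rw [h20]; linarith
      _ < 2 / a + 1 / a := by linarith
      _ = 3 / a := by ring
  have h10 : (0:ℝ) < Real.log 10 := Real.log_pos (by norm_num)
  calc ∑ n ∈ Finset.range (N + 1), 1 / Real.logb 10 ((q n : ℝ))
      = Real.log 10 * ∑ n ∈ Finset.range (N + 1), 1 / Real.log ((q n : ℝ)) := by
        rw [Finset.mul_sum]
        refine Finset.sum_congr rfl fun n _ => ?_
        rw [Real.logb, one_div_div, mul_one_div]
    _ < Real.log 10 * (3 / a) := (mul_lt_mul_iff_right₀ h10).2 key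
    _ = 3 / Real.logb 10 ((q 0 : ℝ)) := by
        rw [Real.logb, div_div_eq_mul_div]
        ring
end

section
/- Let q₀ be a natural number with q₀ ≥ 2. Define integer sequences (a_k), (b_k) by a₀ = b₀ = 1, a_{k+1} = q₀·a_k − b_k, b_{k+1} = q₀·b_k + a_k, and set γ = (π/4)/arctan(1/q₀). Then a_{⌊γ⌋} > 0 and a_{⌊γ⌋+1} < 0. -/
/-- For `q₀ ≥ 2`, with `a₀ = b₀ = 1`, `a_{k+1} = q₀·a_k − b_k`, `b_{k+1} = q₀·b_k + a_k`,
and `γ = (π/4)/arctan(1/q₀)`: the sequence `a` is positive at index `⌊γ⌋` and negative at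
index `⌊γ⌋ + 1`. -/
theorem a_changes_sign_at_floor (q₀ : ℕ) (hq₀ : 2 ≤ q₀) (a b : ℕ → ℤ)
    (ha0 : a 0 = 1) (hb0 : b 0 = 1)
    (ha : ∀ k, a (k + 1) = (q₀ : ℤ) * a k - b k)
    (hb : ∀ k, b (k + 1) = (q₀ : ℤ) * b k + a k)
    (γ : ℝ) (hγ : γ = (Real.pi / 4) / Real.arctan (1 / (q₀ : ℝ))) :
    0 < a (⌊γ⌋.toNat) ∧ a (⌊γ⌋.toNat + 1) < 0 := by
  have hq2 : (2 : ℝ) ≤ (q₀ : ℝ) := by exact_mod_cast hq₀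
  have hqpos : (0 : ℝ) < (q₀ : ℝ) := by linarith
  have hpi := Real.pi_pos
  -- the mod-q₀ lemma: a k ≡ ±1, b k ≡ ±1 mod q₀
  have hmod : ∀ k, ((q₀ : ℤ) ∣ a k - 1 ∨ (q₀ : ℤ) ∣ a k + 1) ∧
      ((q₀ : ℤ) ∣ b k - 1 ∨ (q₀ : ℤ) ∣ b k + 1) := by
    intro k
    induction k with
    | zero => simp [ha0, hb0]
    | succ k ih =>
      obtain ⟨iha, ihb⟩ := ih
      constructor
      · rcases ihb with h | h
        · right
          have he : a (k + 1) + 1 = (q₀ : ℤ) * a k - (b k - 1) := by rw [ha k]; ring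
          rw [he]; exact dvd_sub (Dvd.intro _ rfl) h
        · left
          have he : a (k + 1) - 1 = (q₀ : ℤ) * a k - (b k + 1) := by rw [ha k]; ring
          rw [he]; exact dvd_sub (Dvd.intro _ rfl) h
      · rcases iha with h | h
        · left
          have he : b (k + 1) - 1 = (q₀ : ℤ) * b k + (a k - 1) := by rw [hb k]; ring
          rw [he]; exact dvd_add (Dvd.intro _ rfl) h
        · right
          have he : b (k + 1) + 1 = (q₀ : ℤ) * b k + (a k + 1) := by rw [hb k]; ring
          rw [he]; exact dvd_add (Dvd.intro _ rfl) h
  have hane : ∀ k, a k ≠ 0 := by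
    intro k hk
    have hq1 : (1 : ℤ) < (q₀ : ℤ) := by exact_mod_cast hq₀
    rcases (hmod k).1 with h | h <;> rw [hk] at h
    · have h1 : (q₀ : ℤ) ∣ 1 := by
        have := (dvd_neg (α := ℤ)).2 h
        simpa using this
      have := Int.le_of_dvd one_pos h1
      omega
    · have h1 : (q₀ : ℤ) ∣ 1 := by simpa using h
      have := Int.le_of_dvd one_pos h1
      omega
  -- trig setup
  set θ := Real.arctan (1 / (q₀ : ℝ)) with hθdef
  have hθpos : 0 < θ := by
    rw [hθdef, ← Real.arctan_zero]
    exact Real.arctan_strictMono (by positivity)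
  have hθlt : θ < Real.pi / 4 := by
    rw [← Real.arctan_one]
    apply Real.arctan_strictMono
    rw [div_lt_one hqpos]; linarith
  set s := Real.sqrt ((q₀ : ℝ) ^ 2 + 1) with hsdef
  have hspos : 0 < s := Real.sqrt_pos.2 (by positivity)
  have hsqrt_eq : Real.sqrt (1 + (1 / (q₀ : ℝ)) ^ 2) = s / (q₀ : ℝ) := by
    rw [show (1 + (1 / (q₀ : ℝ)) ^ 2) = ((q₀ : ℝ) ^ 2 + 1) / (q₀ : ℝ) ^ 2 by
      field_simp]
    rw [Real.sqrt_div (by positivity), Real.sqrt_sq hqpos.le]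
  have hcosθ : Real.cos θ = (q₀ : ℝ) / s := by
    rw [hθdef, Real.cos_arctan, hsqrt_eq, one_div_div]
  have hsinθ : Real.sin θ = 1 / s := by
    rw [hθdef, Real.sin_arctan, hsqrt_eq]
    field_simp
  -- closed form
  have key : ∀ k, (a k : ℝ) = Real.sqrt 2 * s ^ k * Real.cos (Real.pi / 4 + k * θ) ∧
      (b k : ℝ) = Real.sqrt 2 * s ^ k * Real.sin (Real.pi / 4 + k * θ) := by
    intro k
    induction k with
    | zero =>
      simp only [ha0, hb0, Nat.cast_zero, pow_zero, zero_mul, add_zero,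
        Real.cos_pi_div_four, Real.sin_pi_div_four, Int.cast_one, mul_one]
      have h2 : Real.sqrt 2 * (Real.sqrt 2 / 2) = 1 := by
        rw [mul_div_assoc', Real.mul_self_sqrt (by norm_num)]
        norm_num
      constructor <;> linarith
    | succ k ih =>
      obtain ⟨iha, ihb⟩ := ih
      have hang : Real.pi / 4 + ((k : ℝ) + 1) * θ = (Real.pi / 4 + k * θ) + θ := by
        ring
      constructor
      · rw [ha k]
        push_cast
        rw [iha, ihb, hang, Real.cos_add (Real.pi / 4 + (k:ℝ) * θ) θ, hcosθ, hsinθ]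
        field_simp
        ring
      · rw [hb k]
        push_cast
        rw [iha, ihb, hang, Real.sin_add (Real.pi / 4 + (k:ℝ) * θ) θ, hcosθ, hsinθ]
        field_simp
        ring
  -- floor facts
  have hγ1 : (1 : ℝ) < γ := by
    rw [hγ, lt_div_iff₀ hθpos, one_mul]
    exact hθlt
  have hfl : (0 : ℤ) ≤ ⌊γ⌋ := Int.floor_nonneg.2 (by linarith)
  set n := ⌊γ⌋.toNat with hndef
  have hncast : ((n : ℕ) : ℝ) = ((⌊γ⌋ : ℤ) : ℝ) := by
    rw [hndef]; exact_mod_cast congrArg (Int.cast : ℤ → ℝ) (Int.toNat_of_nonneg hfl)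
  have hnle : (n : ℝ) ≤ γ := by rw [hncast]; exact Int.floor_le γ
  have hnlt : γ < (n : ℝ) + 1 := by rw [hncast]; exact Int.lt_floor_add_one γ
  have hmul_le : (n : ℝ) * θ ≤ Real.pi / 4 := by
    rw [hγ] at hnle
    exact (le_div_iff₀ hθpos).1 hnle
  have hmul_gt : Real.pi / 4 < ((n : ℝ) + 1) * θ := by
    rw [hγ] at hnlt
    exact (div_lt_iff₀ hθpos).1 hnlt
  constructor
  · -- 0 < a n
    have hcos : 0 ≤ Real.cos (Real.pi / 4 + n * θ) := by
      have h0 : 0 ≤ (n : ℝ) * θ := by positivity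
      apply Real.cos_nonneg_of_neg_pi_div_two_le_of_le <;> linarith
    have hge : (0 : ℝ) ≤ (a n : ℝ) := by
      rw [(key n).1]
      positivity
    have : (0 : ℤ) ≤ a n := by exact_mod_cast hge
    exact lt_of_le_of_ne this (Ne.symm (hane n))
  · -- a (n+1) < 0
    have hcos : Real.cos (Real.pi / 4 + (n + 1 : ℕ) * θ) < 0 := by
      apply Real.cos_neg_of_pi_div_two_lt_of_lt
      · push_cast; linarith
      · push_cast
        have : (n : ℝ) * θ ≤ Real.pi / 4 := hmul_le
        nlinarith
    have hlt : (a (n + 1) : ℝ) < 0 := by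
      rw [(key (n + 1)).1]
      have hpos : 0 < Real.sqrt 2 * s ^ (n + 1) := by positivity
      exact mul_neg_of_pos_of_neg hpos hcos
    exact_mod_cast hlt
end

section
/- Let q₀ be a natural number with q₀ ≥ 2. Define integer sequences (a_k), (b_k) by a₀ = b₀ = 1, a_{k+1} = q₀·a_k − b_k, b_{k+1} = q₀·b_k + a_k, and set γ = (π/4)/arctan(1/q₀). Then for every natural number k with (k : ℝ) ≤ γ + 1, one has b_k > 0 and π/4 − k·arctan(1/q₀) = arctan(a_k/b_k). -/
/-- For `q₀ ≥ 2`, with `a₀ = b₀ = 1`, `a_{k+1} = q₀·a_k − b_k`, `b_{k+1} = q₀·b_k + a_k`,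
and `γ = (π/4)/arctan(1/q₀)`: for every `k` with `(k : ℝ) ≤ γ + 1`, one has `b k > 0` and
`π/4 − k·arctan(1/q₀) = arctan(a k / b k)`. -/
theorem remainder_formula (q₀ : ℕ) (hq₀ : 2 ≤ q₀) (a b : ℕ → ℤ)
    (ha0 : a 0 = 1) (hb0 : b 0 = 1)
    (ha : ∀ k, a (k + 1) = (q₀ : ℤ) * a k - b k)
    (hb : ∀ k, b (k + 1) = (q₀ : ℤ) * b k + a k)
    (γ : ℝ) (hγ : γ = (Real.pi / 4) / Real.arctan (1 / (q₀ : ℝ))) :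
    ∀ k : ℕ, (k : ℝ) ≤ γ + 1 →
      0 < b k ∧
      Real.pi / 4 - (k : ℝ) * Real.arctan (1 / (q₀ : ℝ)) =
        Real.arctan ((a k : ℝ) / (b k : ℝ)) := by
  have hq : (2:ℝ) ≤ (q₀:ℝ) := by exact_mod_cast hq₀
  have hqpos : (0:ℝ) < q₀ := by linarith
  set θ := Real.arctan (1 / (q₀:ℝ)) with hθdef
  have hθpos : 0 < θ := by
    rw [hθdef, ← Real.arctan_zero]
    exact Real.arctan_strictMono (by positivity)
  have hγpos : 0 < γ := by rw [hγ]; positivity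
  have hγθ : γ * θ = Real.pi / 4 := by
    rw [hγ]; field_simp
  intro k
  induction k with
  | zero =>
    intro _
    refine ⟨by simp [hb0], ?_⟩
    simp [ha0, hb0, Real.arctan_one]
  | succ k ih =>
    intro hk1
    have hkγ : (k:ℝ) ≤ γ := by push_cast at hk1; linarith
    obtain ⟨hbk, heq⟩ := ih (by linarith)
    set A := (a k : ℝ)
    set B := (b k : ℝ)
    have hBpos : 0 < B := by show (0:ℝ) < (b k : ℝ); exact_mod_cast hbk
    -- π/4 - kθ ≥ 0, hence a k ≥ 0
    have hrem : 0 ≤ Real.pi / 4 - (k:ℝ) * θ := by nlinarith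
    have hABnn : 0 ≤ A / B := by
      by_contra h
      push_neg at h
      have : Real.arctan (A / B) < Real.arctan 0 := Real.arctan_strictMono h
      rw [Real.arctan_zero] at this
      linarith [heq ▸ hrem]
    have hAnn : 0 ≤ A := by
      have := mul_nonneg hABnn hBpos.le
      rwa [div_mul_cancel₀ _ hBpos.ne'] at this
    have haknn : 0 ≤ a k := by have : (0:ℝ) ≤ (a k : ℝ) := hAnn; exact_mod_cast this
    have hbk1 : 0 < b (k + 1) := by
      rw [hb k]
      have : (2:ℤ) ≤ (q₀:ℤ) := by exact_mod_cast hq₀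
      nlinarith
    refine ⟨hbk1, ?_⟩
    have hmul : (A / B) * (-(1 / (q₀:ℝ))) < 1 := by
      have : (A / B) * (1 / (q₀:ℝ)) ≥ 0 := by positivity
      nlinarith
    have hadd := Real.arctan_add hmul
    rw [Real.arctan_neg] at hadd
    have harg : (A / B + -(1 / (q₀:ℝ))) / (1 - A / B * -(1 / (q₀:ℝ)))
        = ((a (k+1) : ℝ)) / ((b (k+1) : ℝ)) := by
      rw [ha k, hb k]
      push_cast
      rw [div_eq_div_iff]
      · field_simp
        ring
      · have h1 : 0 < 1 + A / B * (1 / (q₀:ℝ)) := by positivity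
        simpa [sub_neg_eq_add, mul_neg] using h1.ne'
      · have : (0:ℝ) < (q₀:ℝ) * B + A := by positivity
        exact this.ne'
    rw [← harg, ← hadd, ← hθdef, ← heq]
    push_cast
    ring
end
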